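/- arXiv:1404.6819 — 6 statements merged into one kernel-verified Lean document; each statement's English description precedes it below -/
import Mathlib

section
/- Let S be a finite set, let B be an S×S real matrix with non-negative entries, let x ∈ ℝ^S be a vector with x_s > 0 for every s ∈ S, and let λ ≥ 0 be a real number such that (Bx)_s ≤ λ x_s for all s ∈ S. Then λ ≥ ρ(B). -/
noncomputable def specRad {S : Type*} [Fintype S] [DecidableEq S] (B : Matrix S S ℝ) : ℝ :=
  (spectralRadius ℂ (B.map Complex.ofReal)).toReal

def matPow {S : Type*} [Fintype S] [DecidableEq S] {k : ℕ}
    (A : Fin k → Matrix S S ℝ) (n : Fin k → ℕ) : Matrix S S ℝ :=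
  ((List.finRange k).map fun i => A i ^ n i).prod

def IsIrreducibleFamily {S : Type*} [Fintype S] [DecidableEq S] {k : ℕ}
    (A : Fin k → Matrix S S ℝ) : Prop :=
  (∀ i, A i ≠ 0) ∧
    ∃ F : Finset (Fin k → ℕ), ∀ v w : S, 0 < (∑ n ∈ F, matPow A n) v w

/-- If `B` is a non-negative real `S × S` matrix, `x` is an entrywise positive vector and
`λ ≥ 0` satisfies `(Bx)_s ≤ λ x_s` for all `s`, then `λ ≥ ρ(B)`. -/
theorem subinvariance_spectral_radius {S : Type*} [Fintype S] [DecidableEq S]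
    (B : Matrix S S ℝ) (hB : ∀ s t, 0 ≤ B s t)
    (x : S → ℝ) (hx : ∀ s, 0 < x s)
    (lam : ℝ) (hlam : 0 ≤ lam)
    (h : ∀ s, B.mulVec x s ≤ lam * x s) :
    specRad B ≤ lam := by
  set M : Matrix S S ℂ := B.map Complex.ofReal with hM
  -- key claim: every element of the spectrum has norm ≤ lam
  have key : ∀ μ ∈ spectrum ℂ M, ‖μ‖ ≤ lam := by
    intro μ hμ
    rw [← AlgEquiv.spectrum_eq (Matrix.toLinAlgEquiv <| Pi.basisFun ℂ S),
      ← Module.End.hasEigenvalue_iff_mem_spectrum] at hμ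
    obtain ⟨v, hv⟩ := hμ.exists_hasEigenvector
    have hv0 : v ≠ 0 := hv.2
    have heig : M.mulVec v = μ • v := by
      have h1 : (Matrix.toLinAlgEquiv (Pi.basisFun ℂ S) M) v = M.mulVec v := by
        rw [Matrix.toLinAlgEquiv_apply]
        have hrepr : ⇑((Pi.basisFun ℂ S).repr v) = v := funext fun i => Pi.basisFun_repr ℂ S v i
        rw [hrepr]
        ext u
        simp [Finset.sum_apply, Pi.basisFun_apply, Pi.basisFun_repr, Pi.single_apply]
      rw [← h1]
      exact hv.apply_eq_smul
    -- choose s maximizing ‖v t‖ / x t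
    obtain ⟨t0, ht0⟩ : ∃ t, v t ≠ 0 := by
      by_contra hc
      push_neg at hc
      exact hv0 (funext hc)
    have hne : (Finset.univ : Finset S).Nonempty := ⟨t0, Finset.mem_univ t0⟩
    obtain ⟨s, -, hs⟩ := Finset.exists_max_image Finset.univ (fun t => ‖v t‖ / x t) hne
    set c : ℝ := ‖v s‖ / x s with hc
    have hcx : ∀ t, ‖v t‖ ≤ c * x t := by
      intro t
      have := hs t (Finset.mem_univ t)
      rw [div_le_div_iff₀ (hx t) (hx s)] at this
      calc ‖v t‖ = ‖v t‖ * x s / x s := (mul_div_cancel_right₀ _ (hx s).ne').symm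
        _ ≤ ‖v s‖ * x t / x s := by gcongr; exact (hx s).le
        _ = c * x t := by rw [hc]; ring
    have hcpos : 0 < c := by
      have h1 : 0 < ‖v t0‖ / x t0 := div_pos (norm_pos_iff.mpr ht0) (hx t0)
      have := hs t0 (Finset.mem_univ t0)
      exact lt_of_lt_of_le h1 this
    have hvs : 0 < ‖v s‖ := by
      have : c * x s > 0 := mul_pos hcpos (hx s)
      have hcs : c * x s = ‖v s‖ := div_mul_cancel₀ _ (hx s).ne'
      linarith [hcs ▸ this]
    -- main estimate
    have hμs : μ * v s = ∑ t, (B s t : ℂ) * v t := by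
      have := congrFun heig s
      simp only [Matrix.mulVec, dotProduct, Pi.smul_apply, smul_eq_mul] at this
      rw [← this]
      rfl
    have hbound : ‖μ‖ * ‖v s‖ ≤ lam * ‖v s‖ := by
      calc ‖μ‖ * ‖v s‖ = ‖μ * v s‖ := (norm_mul _ _).symm
        _ = ‖∑ t, (B s t : ℂ) * v t‖ := by rw [hμs]
        _ ≤ ∑ t, ‖(B s t : ℂ) * v t‖ := norm_sum_le _ _
        _ = ∑ t, B s t * ‖v t‖ := by
            apply Finset.sum_congr rfl
            intro t _
            rw [norm_mul, Complex.norm_real, Real.norm_of_nonneg (hB s t)]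
        _ ≤ ∑ t, B s t * (c * x t) := by
            apply Finset.sum_le_sum
            intro t _
            exact mul_le_mul_of_nonneg_left (hcx t) (hB s t)
        _ = c * B.mulVec x s := by
            simp only [Matrix.mulVec, dotProduct, Finset.mul_sum]
            apply Finset.sum_congr rfl
            intro t _; ring
        _ ≤ c * (lam * x s) := mul_le_mul_of_nonneg_left (h s) hcpos.le
        _ = lam * (c * x s) := by ring
        _ = lam * ‖v s‖ := by rw [hc, div_mul_cancel₀ _ (hx s).ne']
    exact le_of_mul_le_mul_right hbound hvs
  have hsr : spectralRadius ℂ M ≤ (lam.toNNReal : ENNReal) := by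
    rw [spectralRadius]
    apply iSup₂_le
    intro μ hμ
    have := key μ hμ
    rw [ENNReal.coe_le_coe, ← norm_toNNReal]
    exact Real.toNNReal_mono this
  have := ENNReal.toReal_mono (by simp) hsr
  simpa [Real.toNNReal_of_nonneg hlam, specRad] using this
end

section
/- Suppose {A_1,…,A_k} is an irreducible family of pairwise commuting matrices in M_S([0,∞)) for a finite set S, and let x be the unique non-negative common eigenvector of the A_i with Σ_{s∈S} x_s = 1. Then x_s > 0 for every s ∈ S, and for each 1 ≤ i ≤ k one has A_i x = ρ(A_i) x and ρ(A_i) > 0. -/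
private lemma pow_mulVec_eig {S : Type*} [Fintype S] [DecidableEq S]
    (B : Matrix S S ℝ) (x : S → ℝ) (c : ℝ) (h : B.mulVec x = c • x) (m : ℕ) :
    (B ^ m).mulVec x = c ^ m • x := by
  induction m with
  | zero => simp [Matrix.one_mulVec]
  | succ m ih =>
      rw [pow_succ, ← Matrix.mulVec_mulVec, h, Matrix.mulVec_smul, ih, smul_smul, pow_succ,
        mul_comm]

private lemma sum_mulVec' {S : Type*} [Fintype S] {ι : Type*} (F : Finset ι)
    (M : ι → Matrix S S ℝ) (x : S → ℝ) :
    (∑ n ∈ F, M n).mulVec x = ∑ n ∈ F, (M n).mulVec x := by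
  classical
  induction F using Finset.induction with
  | empty => simp [Matrix.zero_mulVec]
  | insert _ _ h ih => simp [Finset.sum_insert h, Matrix.add_mulVec, ih]

/-- If a nonneg matrix has a positive eigenvector with eigenvalue `lam ≥ 0`,
then its (complex) spectral radius equals `lam`. -/
private lemma specRad_eq_of_pos_eigenvector {S : Type*} [Fintype S] [DecidableEq S] [Nonempty S]
    (B : Matrix S S ℝ) (hB : ∀ v w, 0 ≤ B v w) (x : S → ℝ) (hx : ∀ s, 0 < x s)
    (lam : ℝ) (hlam0 : 0 ≤ lam) (h : B.mulVec x = lam • x) : specRad B = lam := by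
  classical
  set Bc : Matrix S S ℂ := B.map Complex.ofReal with hBc
  set xc : S → ℂ := fun s => (x s : ℂ) with hxc
  have hxc0 : xc ≠ 0 := by
    intro h0
    have := congrFun h0 (Classical.arbitrary S)
    simp only [hxc, Pi.zero_apply, Complex.ofReal_eq_zero] at this
    exact (hx _).ne' this
  have hBcx : Bc.mulVec xc = (lam : ℂ) • xc := by
    funext s
    have hs := congrFun h s
    simp only [Matrix.mulVec, dotProduct, Pi.smul_apply, smul_eq_mul] at hs ⊢
    have : ∑ w, Bc s w * xc w = ((∑ w, B s w * x w : ℝ) : ℂ) := by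
      push_cast [hBc, hxc, Matrix.map_apply]
      rfl
    rw [this, hs]
    push_cast
    rfl
  -- lam is in the spectrum
  have hmem : (lam : ℂ) ∈ spectrum ℂ Bc := by
    rw [spectrum.mem_iff, Matrix.isUnit_iff_isUnit_det, isUnit_iff_ne_zero, not_not,
      ← Matrix.exists_mulVec_eq_zero_iff]
    refine ⟨xc, hxc0, ?_⟩
    rw [Matrix.sub_mulVec, hBcx, Algebra.algebraMap_eq_smul_one, Matrix.smul_mulVec,
      Matrix.one_mulVec, sub_self]
  -- every spectral value has modulus ≤ lam
  have hbound : ∀ μ ∈ spectrum ℂ Bc, ‖μ‖ ≤ lam := by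
    intro μ hμ
    rw [spectrum.mem_iff, Matrix.isUnit_iff_isUnit_det, isUnit_iff_ne_zero, not_not,
      ← Matrix.exists_mulVec_eq_zero_iff] at hμ
    obtain ⟨y, hy0, hy⟩ := hμ
    have hyeig : Bc.mulVec y = μ • y := by
      rw [Matrix.sub_mulVec, Algebra.algebraMap_eq_smul_one, Matrix.smul_mulVec,
        Matrix.one_mulVec, sub_eq_zero] at hy
      exact hy.symm
    set g : S → ℝ := fun s => ‖y s‖ with hg
    obtain ⟨s0, -, hs0⟩ := Finset.exists_max_image Finset.univ (fun s => g s / x s)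
      Finset.univ_nonempty
    set t : ℝ := g s0 / x s0 with ht
    have hle : ∀ w, g w ≤ t * x w := by
      intro w
      have h' := hs0 w (Finset.mem_univ w)
      exact (div_le_iff₀ (hx w)).mp h'
    have hgs0 : 0 < g s0 := by
      rcases Function.ne_iff.mp hy0 with ⟨w, hw⟩
      have hgw : 0 < g w := by simpa [hg] using norm_pos_iff.mpr hw
      have := hle w
      have ht0 : 0 < t := by nlinarith [hx w]
      have : g s0 = t * x s0 := by
        rw [ht, div_mul_eq_mul_div, mul_div_cancel_right₀ _ (hx s0).ne']
      nlinarith [hx s0]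
    have key : ‖μ‖ * g s0 ≤ lam * g s0 := by
      have h1 : ‖μ‖ * g s0 = ‖(Bc.mulVec y) s0‖ := by
        rw [hyeig]; simp [hg, norm_smul]
      have h2 : ‖(Bc.mulVec y) s0‖ ≤ ∑ w, B s0 w * g w := by
        rw [Matrix.mulVec]
        refine (norm_sum_le _ _).trans ?_
        apply Finset.sum_le_sum
        intro w _
        rw [norm_mul]
        have : ‖Bc s0 w‖ = B s0 w := by
          simp [hBc, Matrix.map_apply, Complex.norm_real, abs_of_nonneg (hB s0 w)]
        rw [this, hg]
      have h3 : ∑ w, B s0 w * g w ≤ ∑ w, B s0 w * (t * x w) := by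
        apply Finset.sum_le_sum
        intro w _
        exact mul_le_mul_of_nonneg_left (hle w) (hB s0 w)
      have h4 : ∑ w, B s0 w * (t * x w) = lam * g s0 := by
        have hBx : ∑ w, B s0 w * x w = lam * x s0 := by
          have := congrFun h s0
          simpa [Matrix.mulVec, dotProduct] using this
        have hgs0' : g s0 = t * x s0 := by
          rw [ht, div_mul_eq_mul_div, mul_div_cancel_right₀ _ (hx s0).ne']
        calc ∑ w, B s0 w * (t * x w) = t * ∑ w, B s0 w * x w := by
              rw [Finset.mul_sum]; apply Finset.sum_congr rfl; intro w _; ring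
          _ = t * (lam * x s0) := by rw [hBx]
          _ = lam * (t * x s0) := by ring
          _ = lam * g s0 := by rw [hgs0']
      calc ‖μ‖ * g s0 = ‖(Bc.mulVec y) s0‖ := h1
        _ ≤ ∑ w, B s0 w * g w := h2
        _ ≤ ∑ w, B s0 w * (t * x w) := h3
        _ = lam * g s0 := h4
    exact le_of_mul_le_mul_right key hgs0
  -- compute the spectral radius
  have hsr : spectralRadius ℂ Bc = ENNReal.ofReal lam := by
    apply le_antisymm
    · refine iSup₂_le fun μ hμ => ?_
      rw [← enorm_eq_nnnorm, ← ofReal_norm]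
      exact ENNReal.ofReal_le_ofReal (hbound μ hμ)
    · have : ENNReal.ofReal lam = (‖(lam : ℂ)‖₊ : ENNReal) := by
        rw [← enorm_eq_nnnorm, ← ofReal_norm, Complex.norm_real, Real.norm_eq_abs,
          abs_of_nonneg hlam0]
      rw [this]
      exact le_iSup₂ (f := fun μ (_ : μ ∈ spectrum ℂ Bc) => (‖μ‖₊ : ENNReal)) (lam : ℂ) hmem
  rw [specRad, ← hBc, hsr, ENNReal.toReal_ofReal hlam0]

/-- The unique non-negative unimodular common eigenvector `x` of an irreducible family is
entrywise positive, and each `A_i x = ρ(A_i) x` with `ρ(A_i) > 0`. -/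
theorem common_eigenvector_positive {S : Type*} [Fintype S] [DecidableEq S] {k : ℕ}
    (A : Fin k → Matrix S S ℝ)
    (hnn : ∀ i v w, 0 ≤ A i v w)
    (hcomm : ∀ i j, A i * A j = A j * A i)
    (hirr : IsIrreducibleFamily A)
    (x : S → ℝ)
    (hx : (∀ s, 0 ≤ x s) ∧ (∑ s, x s = 1) ∧
      ∀ i, ∃ lam : ℝ, (A i).mulVec x = lam • x) :
    (∀ s, 0 < x s) ∧ ∀ i, (A i).mulVec x = specRad (A i) • x ∧ 0 < specRad (A i) := by
  classical
  obtain ⟨hxnn, hxsum, hlam⟩ := hx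
  choose lam hlam using hlam
  have hex : ∃ s, 0 < x s := by
    by_contra hc
    push_neg at hc
    have : ∀ s, x s = 0 := fun s => le_antisymm (hc s) (hxnn s)
    simp [this] at hxsum
  obtain ⟨s1, hs1⟩ := hex
  have hS : Nonempty S := ⟨s1⟩
  have hlamnn : ∀ i, 0 ≤ lam i := by
    intro i
    have h1 : 0 ≤ ((A i).mulVec x) s1 := by
      rw [Matrix.mulVec]
      exact Finset.sum_nonneg fun w _ => mul_nonneg (hnn i s1 w) (hxnn w)
    rw [hlam i] at h1
    simp only [Pi.smul_apply, smul_eq_mul] at h1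
    nlinarith
  -- mulVec of matPow
  have hmat : ∀ n : Fin k → ℕ, (matPow A n).mulVec x = (∏ i, lam i ^ n i) • x := by
    intro n
    rw [Fin.prod_univ_def]
    unfold matPow
    generalize List.finRange k = L
    induction L with
    | nil => simp [Matrix.one_mulVec]
    | cons i L ih =>
        simp only [List.map_cons, List.prod_cons, ← Matrix.mulVec_mulVec, ih,
          Matrix.mulVec_smul, pow_mulVec_eig (A i) x (lam i) (hlam i) (n i), smul_smul]
        rw [mul_comm]
  obtain ⟨hA0, F, hF⟩ := hirr
  -- positivity of x
  have hxpos : ∀ s, 0 < x s := by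
    intro s
    have hpos : 0 < ((∑ n ∈ F, matPow A n).mulVec x) s := by
      rw [Matrix.mulVec]
      apply Finset.sum_pos'
      · intro w _
        exact mul_nonneg (hF s w).le (hxnn w)
      · exact ⟨s1, Finset.mem_univ s1, mul_pos (hF s s1) hs1⟩
    rw [sum_mulVec'] at hpos
    have : (∑ n ∈ F, (matPow A n).mulVec x) s = (∑ n ∈ F, ∏ i, lam i ^ n i) * x s := by
      rw [Finset.sum_apply]
      rw [Finset.sum_mul]
      apply Finset.sum_congr rfl
      intro n _
      rw [hmat n]
      simp
    rw [this] at hpos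
    have hc : 0 ≤ ∑ n ∈ F, ∏ i, lam i ^ n i :=
      Finset.sum_nonneg fun n _ => Finset.prod_nonneg fun i _ => pow_nonneg (hlamnn i) _
    nlinarith [hxnn s, hc]
  refine ⟨hxpos, fun i => ?_⟩
  -- lam i > 0
  have hlampos : 0 < lam i := by
    obtain ⟨v, w, hvw⟩ : ∃ v w, A i v w ≠ 0 := by
      by_contra hc
      push_neg at hc
      exact hA0 i (by ext v w; exact hc v w)
    have hvw' : 0 < A i v w := lt_of_le_of_ne (hnn i v w) (Ne.symm hvw)
    have h1 : 0 < ((A i).mulVec x) v := by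
      rw [Matrix.mulVec]
      apply Finset.sum_pos'
      · intro u _
        exact mul_nonneg (hnn i v u) (hxnn u)
      · exact ⟨w, Finset.mem_univ w, mul_pos hvw' (hxpos w)⟩
    rw [hlam i] at h1
    simp only [Pi.smul_apply, smul_eq_mul] at h1
    nlinarith [hxpos v]
  have hsr : specRad (A i) = lam i :=
    specRad_eq_of_pos_eigenvector (A i) (hnn i) x hxpos (lam i) (hlamnn i) (hlam i)
  rw [hsr]
  exact ⟨hlam i, hlampos⟩
end

section
/- Suppose {A_1,…,A_k} is an irreducible family of pairwise commuting matrices in M_S([0,∞)) for a finite set S. Suppose y ∈ [0,∞)^S is non-zero and λ ∈ [0,∞)^k satisfies (A_i y)_s ≤ λ_i y_s for all 1 ≤ i ≤ k and all s ∈ S. Then y_s > 0 for every s ∈ S, and λ_i ≥ ρ(A_i) for all 1 ≤ i ≤ k. -/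
/-- Goodness predicate: nonnegative entries and subinvariance bound w.r.t. `y`. -/
def GoodMat {S : Type*} [Fintype S] (y : S → ℝ) (M : Matrix S S ℝ) : Prop :=
  (∀ v w, 0 ≤ M v w) ∧ ∃ c, 0 ≤ c ∧ ∀ s, M.mulVec y s ≤ c * y s

lemma goodMat_one {S : Type*} [Fintype S] [DecidableEq S] (y : S → ℝ) :
    GoodMat y (1 : Matrix S S ℝ) := by
  refine ⟨fun v w => ?_, 1, zero_le_one, fun s => ?_⟩
  · by_cases hvw : v = w <;> simp [Matrix.one_apply, hvw]
  · simp [Matrix.one_mulVec]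

lemma goodMat_mul {S : Type*} [Fintype S] (y : S → ℝ) (hy0 : ∀ s, 0 ≤ y s)
    {M N : Matrix S S ℝ} (hM : GoodMat y M) (hN : GoodMat y N) : GoodMat y (M * N) := by
  obtain ⟨hMnn, cM, hcM, hMb⟩ := hM
  obtain ⟨hNnn, cN, hcN, hNb⟩ := hN
  refine ⟨fun v w => ?_, cM * cN, mul_nonneg hcM hcN, fun s => ?_⟩
  · rw [Matrix.mul_apply]
    exact Finset.sum_nonneg fun t _ => mul_nonneg (hMnn v t) (hNnn t w)
  · have h1 : (M * N).mulVec y s = M.mulVec (N.mulVec y) s := by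
      rw [← Matrix.mulVec_mulVec]
    rw [h1]
    have h2 : M.mulVec (N.mulVec y) s ≤ M.mulVec (fun t => cN * y t) s := by
      unfold Matrix.mulVec dotProduct
      exact Finset.sum_le_sum fun t _ => mul_le_mul_of_nonneg_left (hNb t) (hMnn s t)
    refine h2.trans ?_
    have h3 : M.mulVec (fun t => cN * y t) s = cN * M.mulVec y s := by
      unfold Matrix.mulVec dotProduct
      rw [Finset.mul_sum]; exact Finset.sum_congr rfl fun t _ => by ring
    rw [h3, mul_comm cM cN, mul_assoc]
    exact mul_le_mul_of_nonneg_left (hMb s) hcN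

lemma goodMat_pow {S : Type*} [Fintype S] [DecidableEq S] (y : S → ℝ) (hy0 : ∀ s, 0 ≤ y s)
    {M : Matrix S S ℝ} (hM : GoodMat y M) (n : ℕ) : GoodMat y (M ^ n) := by
  induction n with
  | zero => simpa using goodMat_one y
  | succ m ih => rw [pow_succ]; exact goodMat_mul y hy0 ih hM

lemma goodMat_matPow {S : Type*} [Fintype S] [DecidableEq S] {k : ℕ}
    (A : Fin k → Matrix S S ℝ) (y : S → ℝ) (hy0 : ∀ s, 0 ≤ y s)
    (hA : ∀ i, GoodMat y (A i)) (n : Fin k → ℕ) : GoodMat y (matPow A n) := by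
  unfold matPow
  generalize (List.finRange k) = l
  induction l with
  | nil => simpa using goodMat_one y
  | cons i l ih =>
    rw [List.map_cons, List.prod_cons]
    exact goodMat_mul y hy0 (goodMat_pow y hy0 (hA i) (n i)) ih

/-- Subinvariance for irreducible families: if `y ≥ 0` is non-zero and
`A_i y ≤ λ_i y` entrywise, then `y > 0` and `λ_i ≥ ρ(A_i)` for all `i`. -/
theorem subinvariance_family {S : Type*} [Fintype S] [DecidableEq S] {k : ℕ}
    (A : Fin k → Matrix S S ℝ)
    (hnn : ∀ i v w, 0 ≤ A i v w)
    (hcomm : ∀ i j, A i * A j = A j * A i)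
    (hirr : IsIrreducibleFamily A)
    (y : S → ℝ) (hy0 : ∀ s, 0 ≤ y s) (hy : y ≠ 0)
    (lam : Fin k → ℝ) (hlam : ∀ i, 0 ≤ lam i)
    (h : ∀ i s, (A i).mulVec y s ≤ lam i * y s) :
    (∀ s, 0 < y s) ∧ ∀ i, specRad (A i) ≤ lam i := by
  obtain ⟨hA0, F, hF⟩ := hirr
  -- some coordinate of y is positive
  obtain ⟨s1, hs1⟩ : ∃ s, y s ≠ 0 := Function.ne_iff.mp hy
  have hs1' : 0 < y s1 := lt_of_le_of_ne (hy0 s1) (Ne.symm hs1)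
  have hAgood : ∀ i, GoodMat y (A i) := fun i => ⟨hnn i, lam i, hlam i, h i⟩
  -- Part 1: positivity of y
  have hpos : ∀ s, 0 < y s := by
    intro s
    have hgood := goodMat_matPow A y hy0 hAgood
    -- choose a bound for each n ∈ F
    choose c hc0 hcb using fun n => (hgood n).2
    set B : Matrix S S ℝ := ∑ n ∈ F, matPow A n with hB
    have hBnn : ∀ v w, 0 ≤ B v w := fun v w => le_of_lt (hF v w)
    have hBy : B.mulVec y s ≤ (∑ n ∈ F, c n) * y s := by
      have hsplit : B.mulVec y s = ∑ n ∈ F, (matPow A n).mulVec y s := by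
        simp only [hB, Matrix.mulVec, dotProduct, Matrix.sum_apply, Finset.sum_apply, Finset.sum_mul]
        rw [Finset.sum_comm]
      rw [hsplit, Finset.sum_mul]
      exact Finset.sum_le_sum fun n _ => hcb n s
    have hlow : B s s1 * y s1 ≤ B.mulVec y s := by
      unfold Matrix.mulVec dotProduct
      exact Finset.single_le_sum (fun t _ => mul_nonneg (hBnn s t) (hy0 t))
        (Finset.mem_univ s1)
    have hBpos : 0 < B s s1 * y s1 := mul_pos (hF s s1) hs1'
    have hprod : 0 < (∑ n ∈ F, c n) * y s := lt_of_lt_of_le hBpos (hlow.trans hBy)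
    rcases mul_pos_iff.mp hprod with ⟨_, hpos⟩ | ⟨hneg, _⟩
    · exact hpos
    · exact absurd (Finset.sum_nonneg fun n _ => hc0 n) (not_le.mpr hneg)
  refine ⟨hpos, fun i => ?_⟩
  -- Part 2: spectral radius bound
  unfold specRad
  set M : Matrix S S ℂ := (A i).map Complex.ofReal with hM
  -- Every element of the spectrum has norm ≤ lam i
  have key : ∀ μ ∈ spectrum ℂ M, ‖μ‖ ≤ lam i := by
    intro μ hμ
    rw [spectrum.mem_iff] at hμ
    have hdet : (algebraMap ℂ (Matrix S S ℂ) μ - M).det = 0 := by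
      by_contra hd
      exact hμ ((Matrix.isUnit_iff_isUnit_det _).mpr (isUnit_iff_ne_zero.mpr hd))
    obtain ⟨v, hv0, hveq⟩ := Matrix.exists_mulVec_eq_zero_iff.mpr hdet
    have hMv : M.mulVec v = μ • v := by
      have := hveq
      rw [Matrix.sub_mulVec, Algebra.algebraMap_eq_smul_one, Matrix.smul_mulVec,
        Matrix.one_mulVec, sub_eq_zero] at this
      exact this.symm
    -- z = |v|
    set z : S → ℝ := fun s => ‖v s‖ with hz
    have hz0 : ∀ s, 0 ≤ z s := fun s => norm_nonneg _
    obtain ⟨t0, ht0⟩ : ∃ t, v t ≠ 0 := Function.ne_iff.mp hv0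
    have hzt0 : 0 < z t0 := by simpa [hz] using norm_pos_iff.mpr ht0
    -- |μ| z ≤ A z entrywise
    have hsub : ∀ s, ‖μ‖ * z s ≤ (A i).mulVec z s := by
      intro s
      have h1 : ‖μ‖ * z s = ‖M.mulVec v s‖ := by
        have : M.mulVec v s = μ * v s := by rw [hMv]; simp
        rw [this, norm_mul]
      rw [h1]
      have h2 : ‖M.mulVec v s‖ ≤ ∑ t, ‖M s t * v t‖ := by
        unfold Matrix.mulVec dotProduct
        exact norm_sum_le _ _
      refine h2.trans ?_
      unfold Matrix.mulVec dotProduct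
      apply le_of_eq
      apply Finset.sum_congr rfl
      intro t _
      rw [norm_mul]
      simp [hM, Matrix.map_apply, Complex.norm_real, Real.norm_eq_abs, abs_of_nonneg (hnn i s t), hz]
    -- take the maximizer of z s / y s
    obtain ⟨s0, _, hs0max⟩ := Finset.exists_max_image (Finset.univ : Finset S)
      (fun s => z s / y s) ⟨t0, Finset.mem_univ t0⟩
    set m : ℝ := z s0 / y s0 with hm
    have hmpos : 0 < m :=
      lt_of_lt_of_le (div_pos hzt0 (hpos t0)) (hs0max t0 (Finset.mem_univ t0))
    have hzle : ∀ t, z t ≤ m * y t := by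
      intro t
      have := hs0max t (Finset.mem_univ t)
      rw [div_le_iff₀ (hpos t)] at this
      linarith
    have hzs0 : z s0 = m * y s0 := by
      rw [hm, div_mul_eq_mul_div, mul_div_assoc, div_self (ne_of_gt (hpos s0)), mul_one]
    have hchain : ‖μ‖ * z s0 ≤ lam i * z s0 := by
      refine (hsub s0).trans ?_
      have h3 : (A i).mulVec z s0 ≤ m * (A i).mulVec y s0 := by
        unfold Matrix.mulVec dotProduct
        rw [Finset.mul_sum]
        refine Finset.sum_le_sum fun t _ => ?_
        rw [mul_left_comm]
        exact mul_le_mul_of_nonneg_left (hzle t) (hnn i s0 t)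
      refine h3.trans ?_
      rw [hzs0, mul_left_comm]
      exact mul_le_mul_of_nonneg_left (h i s0) (le_of_lt hmpos)
    have hzs0pos : 0 < z s0 := by rw [hzs0]; exact mul_pos hmpos (hpos s0)
    exact le_of_mul_le_mul_right hchain hzs0pos
  have hsr : spectralRadius ℂ M ≤ ENNReal.ofReal (lam i) := by
    refine iSup₂_le fun μ hμ => ?_
    rw [← enorm_eq_nnnorm, ← ofReal_norm]
    exact ENNReal.ofReal_le_ofReal (key μ hμ)
  exact ENNReal.toReal_le_of_le_ofReal (hlam i) hsr
end

section
/- Suppose {A_1,…,A_k} is an irreducible family of pairwise commuting matrices in M_S([0,∞)) for a finite set S, and let x be the unique non-negative common eigenvector of the A_i with Σ_{s∈S} x_s = 1. If y ∈ [0,∞)^S is non-zero with Σ_{s∈S} y_s = 1 and (A_i y)_s ≤ ρ(A_i) y_s for all 1 ≤ i ≤ k and all s ∈ S, then y = x. -/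
open Matrix


section Aux
set_option linter.unusedSectionVars false
set_option linter.unusedVariables false
variable {S : Type*} [Fintype S] [DecidableEq S]

lemma aux_mul_nonneg {M N : Matrix S S ℝ} (hM : ∀ v w, 0 ≤ M v w) (hN : ∀ v w, 0 ≤ N v w) :
    ∀ v w, 0 ≤ (M * N) v w := by
  intro v w
  rw [Matrix.mul_apply]
  exact Finset.sum_nonneg fun j _ => mul_nonneg (hM v j) (hN j w)

lemma aux_sum_mulVec {ι : Type*} (F : Finset ι) (M : ι → Matrix S S ℝ) (v : S → ℝ) :
    (∑ n ∈ F, M n) *ᵥ v = ∑ n ∈ F, (M n) *ᵥ v := by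
  funext s
  simp only [Matrix.mulVec, dotProduct, Finset.sum_apply, Matrix.sum_apply,
    Finset.sum_mul]
  rw [Finset.sum_comm]

lemma aux_good_mul {y : S → ℝ} (hy0 : ∀ s, 0 ≤ y s) {M N : Matrix S S ℝ} {r t : ℝ}
    (hM : ∀ v w, 0 ≤ M v w) (hr : 0 ≤ r) (hMy : ∀ s, (M *ᵥ y) s ≤ r * y s)
    (hN : ∀ v w, 0 ≤ N v w) (ht : 0 ≤ t) (hNy : ∀ s, (N *ᵥ y) s ≤ t * y s) :
    ∀ s, ((M * N) *ᵥ y) s ≤ (r * t) * y s := by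
  intro s
  rw [← Matrix.mulVec_mulVec]
  have h1 : (M *ᵥ (N *ᵥ y)) s ≤ (M *ᵥ (t • y)) s := by
    simp only [Matrix.mulVec, dotProduct]
    exact Finset.sum_le_sum fun w _ => mul_le_mul_of_nonneg_left (by simpa [Matrix.mulVec, dotProduct] using hNy w) (hM s w)
  have h2 : (M *ᵥ (t • y)) s = t * (M *ᵥ y) s := by rw [Matrix.mulVec_smul]; rfl
  calc (M *ᵥ (N *ᵥ y)) s ≤ t * (M *ᵥ y) s := by rw [← h2]; exact h1
    _ ≤ t * (r * y s) := mul_le_mul_of_nonneg_left (hMy s) ht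
    _ = (r * t) * y s := by ring

lemma aux_good_pow {y : S → ℝ} (hy0 : ∀ s, 0 ≤ y s) {M : Matrix S S ℝ} {r : ℝ}
    (hM : ∀ v w, 0 ≤ M v w) (hr : 0 ≤ r) (hMy : ∀ s, (M *ᵥ y) s ≤ r * y s) (m : ℕ) :
    (∀ v w, 0 ≤ (M ^ m) v w) ∧ ∀ s, ((M ^ m) *ᵥ y) s ≤ r ^ m * y s := by
  induction m with
  | zero => refine ⟨fun v w => ?_, fun s => ?_⟩ <;>
      simp [Matrix.one_apply, Matrix.one_mulVec] <;> positivity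
  | succ m ih =>
      refine ⟨?_, ?_⟩
      · rw [pow_succ]; exact aux_mul_nonneg ih.1 hM
      · rw [pow_succ, pow_succ]
        exact aux_good_mul hy0 ih.1 (pow_nonneg hr m) ih.2 hM hr hMy

lemma aux_good_list {k : ℕ} {y : S → ℝ} (hy0 : ∀ s, 0 ≤ y s) {A : Fin k → Matrix S S ℝ}
    {r : Fin k → ℝ} (hA : ∀ i v w, 0 ≤ A i v w) (hr : ∀ i, 0 ≤ r i)
    (hAy : ∀ i s, ((A i) *ᵥ y) s ≤ r i * y s) (n : Fin k → ℕ) (L : List (Fin k)) :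
    (∀ v w, 0 ≤ ((L.map fun i => A i ^ n i).prod) v w) ∧
      (0 ≤ (L.map fun i => r i ^ n i).prod) ∧
      ∀ s, (((L.map fun i => A i ^ n i).prod) *ᵥ y) s ≤ (L.map fun i => r i ^ n i).prod * y s := by
  induction L with
  | nil =>
      refine ⟨fun v w => ?_, by simp, fun s => ?_⟩ <;>
        simp [Matrix.one_apply, Matrix.one_mulVec] <;> positivity
  | cons i L ih =>
      obtain ⟨h1, h2⟩ := aux_good_pow hy0 (hA i) (hr i) (hAy i) (n i)
      simp only [List.map_cons, List.prod_cons]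
      exact ⟨aux_mul_nonneg h1 ih.1, mul_nonneg (pow_nonneg (hr i) _) ih.2.1,
        aux_good_mul hy0 h1 (pow_nonneg (hr i) _) h2 ih.1 ih.2.1 ih.2.2⟩

lemma aux_eig_pow {x : S → ℝ} {M : Matrix S S ℝ} {lam : ℝ}
    (hMx : M *ᵥ x = lam • x) (m : ℕ) : (M ^ m) *ᵥ x = (lam ^ m) • x := by
  induction m with
  | zero => simp [Matrix.one_mulVec]
  | succ m ih =>
      rw [pow_succ, ← Matrix.mulVec_mulVec, hMx, Matrix.mulVec_smul, ih, pow_succ, smul_smul]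
      rw [mul_comm]

lemma aux_eig_list {k : ℕ} {x : S → ℝ} {A : Fin k → Matrix S S ℝ} {lam : Fin k → ℝ}
    (hAx : ∀ i, (A i) *ᵥ x = lam i • x) (n : Fin k → ℕ) (L : List (Fin k)) :
    ((L.map fun i => A i ^ n i).prod) *ᵥ x = ((L.map fun i => lam i ^ n i).prod) • x := by
  induction L with
  | nil => simp [Matrix.one_mulVec]
  | cons i L ih =>
      simp only [List.map_cons, List.prod_cons]
      rw [← Matrix.mulVec_mulVec, ih, Matrix.mulVec_smul, aux_eig_pow (hAx i), smul_smul,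
        mul_comm]

/-- A nonnegative matrix with strictly positive eigenvector `x` has spectral radius `lam`. -/
lemma aux_specRad_eq {A : Matrix S S ℝ} (hA : ∀ v w, 0 ≤ A v w) {x : S → ℝ}
    (hxpos : ∀ s, 0 < x s) {lam : ℝ} (hlam : 0 ≤ lam) (hAx : A *ᵥ x = lam • x)
    [Nonempty S] :
    (spectralRadius ℂ (A.map Complex.ofReal)).toReal = lam := by
  set Ac := A.map Complex.ofReal with hAc
  -- lam is in the spectrum
  have hmem : (lam : ℂ) ∈ spectrum ℂ Ac := by
    rw [spectrum.mem_iff, Matrix.isUnit_iff_isUnit_det]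
    have hdet : (algebraMap ℂ (Matrix S S ℂ) lam - Ac).det = 0 := by
      rw [← Matrix.exists_mulVec_eq_zero_iff]
      refine ⟨fun s => (x s : ℂ), ?_, ?_⟩
      · intro h0
        have := congrFun h0 (Classical.arbitrary S)
        simp only [Pi.zero_apply, Complex.ofReal_eq_zero] at this
        exact (hxpos _).ne' this
      · rw [Matrix.sub_mulVec]
        funext s
        have h1 : (Ac *ᵥ fun s => (x s : ℂ)) s = ((A *ᵥ x) s : ℂ) := by
          simp [Matrix.mulVec, dotProduct, hAc, Matrix.map_apply]
        have h2 : ((algebraMap ℂ (Matrix S S ℂ) lam) *ᵥ fun s => (x s : ℂ)) s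
            = (lam : ℂ) * (x s : ℂ) := by
          simp [Matrix.algebraMap_matrix_apply, Matrix.mulVec, dotProduct]
        simp only [Pi.sub_apply, Pi.zero_apply, h1, h2, hAx, Pi.smul_apply, smul_eq_mul]
        push_cast
        ring
    rw [hdet]
    exact not_isUnit_zero
  -- every spectral value has modulus ≤ lam
  have hbd : ∀ μ ∈ spectrum ℂ Ac, ‖μ‖ ≤ lam := by
    intro μ hμ
    rw [spectrum.mem_iff, Matrix.isUnit_iff_isUnit_det] at hμ
    have hdet : (algebraMap ℂ (Matrix S S ℂ) μ - Ac).det = 0 := by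
      by_contra hne
      exact hμ (isUnit_iff_ne_zero.mpr hne)
    obtain ⟨u, hu0, huv⟩ := (Matrix.exists_mulVec_eq_zero_iff).mpr hdet
    have hAu : ∀ s, (Ac *ᵥ u) s = μ * u s := by
      intro s
      have := congrFun huv s
      rw [Matrix.sub_mulVec] at this
      have h2 : ((algebraMap ℂ (Matrix S S ℂ) μ) *ᵥ u) s = μ * u s := by
        simp [Matrix.algebraMap_matrix_apply, Matrix.mulVec, dotProduct]
      simp only [Pi.sub_apply, Pi.zero_apply, h2] at this
      exact (sub_eq_zero.mp this).symm
    set g : S → ℝ := fun s => ‖u s‖ with hg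
    obtain ⟨s0, -, hs0⟩ := Finset.exists_max_image Finset.univ (fun s => g s / x s)
      ⟨Classical.arbitrary S, Finset.mem_univ _⟩
    obtain ⟨s1, hs1⟩ := Function.ne_iff.mp hu0
    have hgs1 : 0 < g s1 := by simpa [hg] using norm_pos_iff.mpr hs1
    have hgs0 : 0 < g s0 := by
      have h1 : 0 < g s1 / x s1 := div_pos hgs1 (hxpos s1)
      have h2 := hs0 s1 (Finset.mem_univ _)
      have : 0 < g s0 / x s0 := lt_of_lt_of_le h1 h2
      have := mul_pos this (hxpos s0)
      rwa [div_mul_cancel₀ _ (hxpos s0).ne'] at this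
    -- key inequality
    have key : ‖μ‖ * g s0 ≤ lam * g s0 := by
      have h1 : ‖μ‖ * g s0 = ‖(Ac *ᵥ u) s0‖ := by
        rw [hAu s0, norm_mul]
      have h2 : ‖(Ac *ᵥ u) s0‖ ≤ ∑ w, A s0 w * g w := by
        have he : (Ac *ᵥ u) s0 = ∑ w, Ac s0 w * u w := rfl
        rw [he]
        refine (norm_sum_le _ _).trans ?_
        refine Finset.sum_le_sum fun w _ => ?_
        have hn : ‖Ac s0 w‖ = A s0 w := by
          simp [hAc, Matrix.map_apply, Complex.norm_real, Real.norm_eq_abs,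
            abs_of_nonneg (hA s0 w)]
        rw [norm_mul, hn]
      have h3 : ∑ w, A s0 w * g w ≤ ∑ w, A s0 w * ((g s0 / x s0) * x w) := by
        refine Finset.sum_le_sum fun w _ => ?_
        refine mul_le_mul_of_nonneg_left ?_ (hA s0 w)
        have := hs0 w (Finset.mem_univ _)
        calc g w = (g w / x w) * x w := (div_mul_cancel₀ _ (hxpos w).ne').symm
          _ ≤ (g s0 / x s0) * x w := mul_le_mul_of_nonneg_right this (hxpos w).le
      have h4 : ∑ w, A s0 w * ((g s0 / x s0) * x w) = (g s0 / x s0) * (A *ᵥ x) s0 := by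
        simp only [Matrix.mulVec, dotProduct, Finset.mul_sum]
        exact Finset.sum_congr rfl fun w _ => by ring
      have h5 : (A *ᵥ x) s0 = lam * x s0 := by rw [hAx]; simp
      have hx0 : x s0 ≠ 0 := (hxpos s0).ne'
      calc ‖μ‖ * g s0 = ‖(Ac *ᵥ u) s0‖ := h1
        _ ≤ ∑ w, A s0 w * g w := h2
        _ ≤ ∑ w, A s0 w * ((g s0 / x s0) * x w) := h3
        _ = (g s0 / x s0) * (lam * x s0) := by rw [h4, h5]
        _ = lam * g s0 := by field_simp
    exact le_of_mul_le_mul_right key hgs0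
  -- conclude
  have hsr_le : spectralRadius ℂ Ac ≤ ENNReal.ofReal lam := by
    rw [spectralRadius]
    refine iSup₂_le fun μ hμ => ?_
    rw [← enorm_eq_nnnorm, ← ofReal_norm]
    exact ENNReal.ofReal_le_ofReal (hbd μ hμ)
  have hle' : ENNReal.ofReal lam ≤ spectralRadius ℂ Ac := by
    have h1 : ENNReal.ofReal lam = (‖(lam : ℂ)‖₊ : ENNReal) := by
      rw [← enorm_eq_nnnorm, ← ofReal_norm, Complex.norm_real, Real.norm_eq_abs, abs_of_nonneg hlam]
    rw [h1, spectralRadius]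
    exact le_iSup₂ (f := fun μ (_ : μ ∈ spectrum ℂ Ac) => (‖μ‖₊ : ENNReal)) (lam : ℂ) hmem
  rw [le_antisymm hsr_le hle', ENNReal.toReal_ofReal hlam]

end Aux

/-- If `y ≥ 0` is non-zero of unit `1`-norm and `A_i y ≤ ρ(A_i) y` entrywise for all `i`,
then `y` equals the unimodular Perron–Frobenius eigenvector `x`. -/
theorem subinvariant_unimodular_eq_eigenvector {S : Type*} [Fintype S] [DecidableEq S] {k : ℕ}
    (A : Fin k → Matrix S S ℝ)
    (hnn : ∀ i v w, 0 ≤ A i v w)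
    (hcomm : ∀ i j, A i * A j = A j * A i)
    (hirr : IsIrreducibleFamily A)
    (x : S → ℝ)
    (hx : (∀ s, 0 ≤ x s) ∧ (∑ s, x s = 1) ∧
      ∀ i, ∃ lam : ℝ, (A i).mulVec x = lam • x)
    (y : S → ℝ) (hy0 : ∀ s, 0 ≤ y s) (hy : y ≠ 0) (hysum : ∑ s, y s = 1)
    (h : ∀ i s, (A i).mulVec y s ≤ specRad (A i) * y s) :
    y = x := by
  obtain ⟨hx0, hxsum, hxeig⟩ := hx
  choose lam hlam using hxeig
  haveI hS : Nonempty S := by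
    by_contra hS
    rw [not_nonempty_iff] at hS
    simp [Finset.univ_eq_empty] at hysum
  obtain ⟨hAne, F, hF⟩ := hirr
  -- a positive entry of x
  have hxex : ∃ s, 0 < x s := by
    by_contra hc
    push_neg at hc
    have : ∀ s, x s = 0 := fun s => le_antisymm (hc s) (hx0 s)
    simp [this] at hxsum
  have hyex : ∃ s, 0 < y s := by
    by_contra hc
    push_neg at hc
    have : ∀ s, y s = 0 := fun s => le_antisymm (hc s) (hy0 s)
    exact hy (funext this)
  -- lam i ≥ 0
  have hlam0 : ∀ i, 0 ≤ lam i := by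
    intro i
    obtain ⟨s, hs⟩ := hxex
    have h1 : 0 ≤ ((A i) *ᵥ x) s :=
      Finset.sum_nonneg fun w _ => mul_nonneg (hnn i s w) (hx0 w)
    rw [hlam i] at h1
    simp only [Pi.smul_apply, smul_eq_mul] at h1
    by_contra hc
    push_neg at hc
    nlinarith
  set r : Fin k → ℝ := fun i => specRad (A i) with hr
  have hr0 : ∀ i, 0 ≤ r i := fun i => ENNReal.toReal_nonneg
  set c : ℝ := ∑ n ∈ F, ((List.finRange k).map fun i => r i ^ n i).prod with hc
  set c' : ℝ := ∑ n ∈ F, ((List.finRange k).map fun i => lam i ^ n i).prod with hc'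
  set B : Matrix S S ℝ := ∑ n ∈ F, matPow A n with hB
  have hBy : ∀ s, (B *ᵥ y) s ≤ c * y s := by
    intro s
    rw [hB, aux_sum_mulVec]
    rw [Finset.sum_apply]
    rw [hc, Finset.sum_mul]
    refine Finset.sum_le_sum fun n _ => ?_
    exact (aux_good_list hy0 hnn hr0 h n (List.finRange k)).2.2 s
  have hBx : B *ᵥ x = c' • x := by
    rw [hB, aux_sum_mulVec, hc']
    rw [Finset.sum_smul]
    exact Finset.sum_congr rfl fun n _ => aux_eig_list hlam n (List.finRange k)
  -- strict positivity of y
  have hypos : ∀ s, 0 < y s := by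
    intro s
    obtain ⟨w0, hw0⟩ := hyex
    have h1 : 0 < (B *ᵥ y) s :=
      Finset.sum_pos' (fun w _ => mul_nonneg (hF s w).le (hy0 w))
        ⟨w0, Finset.mem_univ _, mul_pos (hF s w0) hw0⟩
    have h2 := lt_of_lt_of_le h1 (hBy s)
    rcases (hy0 s).lt_or_eq with h3 | h3
    · exact h3
    · rw [← h3] at h2; simp at h2
  have hc_pos : 0 < c := by
    obtain ⟨s⟩ := hS
    have h1 : 0 < (B *ᵥ y) s :=
      Finset.sum_pos' (fun w _ => mul_nonneg (hF s w).le (hy0 w))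
        ⟨s, Finset.mem_univ _, mul_pos (hF s s) (hypos s)⟩
    have h2 := lt_of_lt_of_le h1 (hBy s)
    nlinarith [hypos s]
  -- strict positivity of x
  have hxpos : ∀ s, 0 < x s := by
    intro s
    obtain ⟨w0, hw0⟩ := hxex
    have h1 : 0 < (B *ᵥ x) s :=
      Finset.sum_pos' (fun w _ => mul_nonneg (hF s w).le (hx0 w))
        ⟨w0, Finset.mem_univ _, mul_pos (hF s w0) hw0⟩
    rw [hBx] at h1
    simp only [Pi.smul_apply, smul_eq_mul] at h1
    rcases (hx0 s).lt_or_eq with h3 | h3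
    · exact h3
    · rw [← h3] at h1; simp at h1
  -- spectral radii equal the eigenvalues
  have hreq : ∀ i, r i = lam i := fun i =>
    aux_specRad_eq (hnn i) hxpos (hlam0 i) (hlam i)
  have hcc : c = c' := by
    rw [hc, hc']
    refine Finset.sum_congr rfl fun n _ => ?_
    congr 1
    exact List.map_congr_left fun i _ => by rw [hreq i]
  -- the minimizing coordinate
  obtain ⟨s0, -, hs0⟩ := Finset.exists_min_image Finset.univ (fun s => y s / x s)
    ⟨Classical.arbitrary S, Finset.mem_univ _⟩
  set t : ℝ := y s0 / x s0 with htdef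
  have ht : 0 < t := div_pos (hypos s0) (hxpos s0)
  have hz : ∀ s, t * x s ≤ y s := by
    intro s
    have h1 := hs0 s (Finset.mem_univ _)
    rw [div_le_div_iff₀ (hxpos s0) (hxpos s)] at h1
    rw [htdef, div_mul_eq_mul_div, div_le_iff₀ (hxpos s0)]
    linarith
  set z : S → ℝ := y - t • x with hzdef
  have hz0 : ∀ s, 0 ≤ z s := fun s => by
    simp only [hzdef, Pi.sub_apply, Pi.smul_apply, smul_eq_mul]
    linarith [hz s]
  have hzs0 : z s0 = 0 := by
    simp only [hzdef, Pi.sub_apply, Pi.smul_apply, smul_eq_mul, htdef]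
    rw [div_mul_cancel₀ _ (hxpos s0).ne', sub_self]
  have hzero : z = 0 := by
    by_contra hzne
    have hzex : ∃ s1, 0 < z s1 := by
      by_contra hcz
      push_neg at hcz
      exact hzne (funext fun s => le_antisymm (hcz s) (hz0 s))
    obtain ⟨s1, hs1⟩ := hzex
    have hpos : 0 < (B *ᵥ z) s0 :=
      Finset.sum_pos' (fun w _ => mul_nonneg (hF s0 w).le (hz0 w))
        ⟨s1, Finset.mem_univ _, mul_pos (hF s0 s1) hs1⟩
    have hle : (B *ᵥ z) s0 ≤ c * z s0 := by
      have heq : B *ᵥ z = B *ᵥ y - t • (B *ᵥ x) := by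
        rw [hzdef, Matrix.mulVec_sub, Matrix.mulVec_smul]
      rw [heq]
      simp only [Pi.sub_apply, Pi.smul_apply, smul_eq_mul, hBx]
      have h1 := hBy s0
      have h2 : z s0 = y s0 - t * x s0 := rfl
      rw [h2]
      rw [hcc] at h1
      nlinarith [ht.le]
    rw [hzs0, mul_zero] at hle
    linarith
  have hyx : y = t • x := by rwa [sub_eq_zero] at hzero
  have ht1 : t = 1 := by
    have h1 : ∑ s, y s = ∑ s, t * x s := by
      rw [hyx]; exact Finset.sum_congr rfl fun s _ => rfl
    rw [hysum, ← Finset.mul_sum, hxsum, mul_one] at h1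
    exact h1.symm
  rw [hyx, ht1, one_smul]
end

section
/- Let Λ be a finite k-graph with coordinate matrices A_1,…,A_k, where A_i(v,w) = |vΛ^{e_i}w|. Then the A_i are nonzero and pairwise commuting, and Λ is strongly connected if and only if {A_1,…,A_k} is an irreducible family of matrices (i.e. there is a finite subset F ⊆ ℕ^k such that Σ_{n∈F} Π_{i=1}^k A_i^{n_i} has all entries strictly positive). -/
/-- A higher-rank graph (`k`-graph): a countable category with a degree functor
`d : Λ → ℕ^k` satisfying the unique factorisation property.  Morphisms are called
paths; the vertices are the paths of degree `0` (the identity morphisms).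
`r` and `s` are the codomain (range) and domain (source) maps.  By convention
`Λ^{e_i} ≠ ∅` for each standard generator `e_i` of `ℕ^k`. -/
structure KGraph (k : ℕ) where
  Path : Type
  countable : Countable Path
  d : Path → Fin k → ℕ
  r : Path → Path
  s : Path → Path
  d_r : ∀ lam, d (r lam) = 0
  d_s : ∀ lam, d (s lam) = 0
  r_vertex : ∀ v, d v = 0 → r v = v
  s_vertex : ∀ v, d v = 0 → s v = v
  comp : ∀ μ ν : Path, s μ = r ν → Path
  r_comp : ∀ μ ν h, r (comp μ ν h) = r μ
  s_comp : ∀ μ ν h, s (comp μ ν h) = s ν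
  d_comp : ∀ μ ν h, d (comp μ ν h) = d μ + d ν
  id_comp : ∀ lam (h : s (r lam) = r lam), comp (r lam) lam h = lam
  comp_id : ∀ lam (h : s lam = r (s lam)), comp lam (s lam) h = lam
  assoc : ∀ μ ν τ (h1 : s μ = r ν) (h2 : s ν = r τ)
      (h3 : s (comp μ ν h1) = r τ) (h4 : s μ = r (comp ν τ h2)),
      comp (comp μ ν h1) τ h3 = comp μ (comp ν τ h2) h4
  factor : ∀ (lam : Path) (m n : Fin k → ℕ), d lam = m + n →
      ∃! μν : Path × Path, ∃ h : s μν.1 = r μν.2,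
        d μν.1 = m ∧ d μν.2 = n ∧ comp μν.1 μν.2 h = lam
  edge_nonempty : ∀ i : Fin k, ∃ lam, d lam = Pi.single i 1

namespace KGraph

variable {k : ℕ}

/-- The vertices of a `k`-graph: the paths of degree `0`. -/
abbrev Vertex (Λ : KGraph k) : Type := {v : Λ.Path // Λ.d v = 0}

/-- A `k`-graph is finite if `Λ^n` is finite for every `n ∈ ℕ^k`. -/
def IsFinite (Λ : KGraph k) : Prop := ∀ n : Fin k → ℕ, {lam : Λ.Path | Λ.d lam = n}.Finite

/-- A `k`-graph is strongly connected if `vΛw ≠ ∅` for all vertices `v, w`. -/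
def StronglyConnected (Λ : KGraph k) : Prop :=
  ∀ v w : Λ.Path, Λ.d v = 0 → Λ.d w = 0 → ∃ lam : Λ.Path, Λ.r lam = v ∧ Λ.s lam = w

/-- `Λ^min(μ,ν) = {(α,β) : μα = νβ, d(μα) = d(μ) ∨ d(ν)}`. -/
def minSet (Λ : KGraph k) (μ ν : Λ.Path) : Set (Λ.Path × Λ.Path) :=
  {p | ∃ (h1 : Λ.s μ = Λ.r p.1) (h2 : Λ.s ν = Λ.r p.2),
      Λ.comp μ p.1 h1 = Λ.comp ν p.2 h2 ∧ Λ.d μ + Λ.d p.1 = Λ.d μ ⊔ Λ.d ν}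

end KGraph

/-- An infinite path in a `k`-graph `Λ`: a degree-preserving functor `x : Ω_k → Λ`,
recorded by its values `x(m,n)` for `m ≤ n` in `ℕ^k`. -/
structure InfinitePath {k : ℕ} (Λ : KGraph k) where
  toFun : ∀ m n : Fin k → ℕ, m ≤ n → Λ.Path
  d_eq : ∀ m n h, Λ.d (toFun m n h) = n - m
  src : ∀ m n h, Λ.s (toFun m n h) = toFun n n le_rfl
  rng : ∀ m n h, Λ.r (toFun m n h) = toFun m m le_rfl
  comp_eq : ∀ m n p (h1 : m ≤ n) (h2 : n ≤ p)
      (hc : Λ.s (toFun m n h1) = Λ.r (toFun n p h2)),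
      Λ.comp (toFun m n h1) (toFun n p h2) hc = toFun m p (h1.trans h2)

namespace InfinitePath

variable {k : ℕ} {Λ : KGraph k}

/-- The shift map `σ^n` on the infinite-path space, `σ^n(x)(p,q) = x(n+p, n+q)`. -/
def shift (x : InfinitePath Λ) (n : Fin k → ℕ) : InfinitePath Λ where
  toFun p q h := x.toFun (n + p) (n + q) (add_le_add le_rfl h)
  d_eq p q h := by
    rw [x.d_eq]
    funext i
    exact Nat.add_sub_add_left (n i) (q i) (p i)
  src p q h := x.src _ _ _
  rng p q h := x.rng _ _ _
  comp_eq p q t h1 h2 hc := x.comp_eq _ _ _ _ _ hc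

/-- The range `r(x) = x(0,0)` of an infinite path. -/
def range (x : InfinitePath Λ) : Λ.Path := x.toFun 0 0 le_rfl

end InfinitePath

/-- `ExtEq Λ lam y x` says that `y = lam · x`, i.e. `y(0, d(lam)) = lam` and
`σ^{d(lam)}(y) = x`.  (Such an extension is unique when it exists.) -/
def KGraph.ExtEq {k : ℕ} (Λ : KGraph k) (lam : Λ.Path) (y x : InfinitePath Λ) : Prop :=
  y.toFun 0 (Λ.d lam) zero_le = lam ∧ y.shift (Λ.d lam) = x

/-- `Λ.IsTheta m n μ ν` says that `μ ∈ Λ^m`, `ν ∈ Λ^n`, and `μx = νx` for every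
infinite path `x ∈ Z(s(μ))`; i.e. `ν = θ_{m,n}(μ)`. -/
def KGraph.IsTheta {k : ℕ} (Λ : KGraph k) (m n : Fin k → ℕ) (μ ν : Λ.Path) : Prop :=
  Λ.d μ = m ∧ Λ.d ν = n ∧
    ∀ x : InfinitePath Λ, x.range = Λ.s μ →
      ∃ y : InfinitePath Λ, Λ.ExtEq μ y x ∧ Λ.ExtEq ν y x

/-- The periodicity group `Per Λ = {m − n : σ^m(x) = σ^n(x) for all x ∈ Λ^∞} ⊆ ℤ^k`. -/
def KGraph.Per {k : ℕ} (Λ : KGraph k) : Set (Fin k → ℤ) :=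
  {g | ∃ m n : Fin k → ℕ, (∀ i, (m i : ℤ) - n i = g i) ∧
      ∀ x : InfinitePath Λ, x.shift m = x.shift n}

/-- `Λ` is aperiodic if every vertex `v` admits `x ∈ Z(v)` with
`σ^m(x) ≠ σ^n(x)` for all `m ≠ n` in `ℕ^k`. -/
def KGraph.Aperiodic {k : ℕ} (Λ : KGraph k) : Prop :=
  ∀ v : Λ.Path, Λ.d v = 0 → ∃ x : InfinitePath Λ, x.range = v ∧
    ∀ m n : Fin k → ℕ, m ≠ n → x.shift m ≠ x.shift n

/-- The `i`-th coordinate matrix of a `k`-graph: `A_i(v,w) = |vΛ^{e_i}w|`. -/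
noncomputable def coordMatrix {k : ℕ} (Λ : KGraph k) (i : Fin k) :
    Matrix Λ.Vertex Λ.Vertex ℝ :=
  Matrix.of fun v w =>
    (({lam : Λ.Path | Λ.d lam = Pi.single i 1 ∧ Λ.r lam = v.1 ∧ Λ.s lam = w.1}).ncard : ℝ)

namespace KGraph

variable {k : ℕ} (Λ : KGraph k)

/-- `vΛ^n w` as a set of paths. -/
def pathSet (v w : Λ.Vertex) (n : Fin k → ℕ) : Set Λ.Path :=
  {lam : Λ.Path | Λ.d lam = n ∧ Λ.r lam = v.1 ∧ Λ.s lam = w.1}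

lemma pathSet_finite (hfin : Λ.IsFinite) (v w : Λ.Vertex) (n : Fin k → ℕ) :
    (Λ.pathSet v w n).Finite :=
  (hfin n).subset fun _ h => h.1

/-- The matrix counting `vΛ^n w`. -/
noncomputable def cMat [Fintype Λ.Vertex] (n : Fin k → ℕ) :
    Matrix Λ.Vertex Λ.Vertex ℝ :=
  Matrix.of fun v w => ((Λ.pathSet v w n).ncard : ℝ)

lemma coordMatrix_eq [Fintype Λ.Vertex] (i : Fin k) :
    coordMatrix Λ i = Λ.cMat (Pi.single i 1) := rfl

lemma cMat_zero [Fintype Λ.Vertex] [DecidableEq Λ.Vertex] : Λ.cMat 0 = 1 := by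
  ext v w
  by_cases h : v = w
  · subst h
    have hset : Λ.pathSet v v 0 = {v.1} := by
      ext lam
      constructor
      · rintro ⟨hd, hr, -⟩
        rw [← hr, Λ.r_vertex lam hd]
        rfl
      · rintro rfl
        exact ⟨v.2, Λ.r_vertex v.1 v.2, Λ.s_vertex v.1 v.2⟩
    simp [cMat, hset, Matrix.one_apply]
  · have hset : Λ.pathSet v w 0 = ∅ := by
      ext lam
      simp only [Set.mem_empty_iff_false, iff_false]
      rintro ⟨hd, hr, hs⟩
      exact h (Subtype.ext (by rw [← hr, ← hs, Λ.r_vertex lam hd, Λ.s_vertex lam hd]))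
    simp [cMat, hset, Matrix.one_apply, h]

private lemma ncard_iUnion_aux {α ι : Type*} [Fintype ι] {f : ι → Set α}
    (hf : ∀ i, (f i).Finite) (hd : ∀ i j, i ≠ j → Disjoint (f i) (f j)) :
    (⋃ i, f i).ncard = ∑ i, (f i).ncard := by
  classical
  have hU : (⋃ i, f i).Finite := Set.finite_iUnion hf
  rw [Set.ncard_eq_toFinset_card _ hU]
  have hfs : hU.toFinset = Finset.univ.biUnion fun i => (hf i).toFinset := by
    ext x; simp
  rw [hfs, Finset.card_biUnion]
  · exact Finset.sum_congr rfl fun i _ => (Set.ncard_eq_toFinset_card _ (hf i)).symm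
  · intro i _ j _ hij
    exact Set.Finite.disjoint_toFinset.mpr (hd i j hij)

lemma ncard_pathSet_add [Fintype Λ.Vertex] (hfin : Λ.IsFinite) (v w : Λ.Vertex)
    (m n : Fin k → ℕ) :
    (Λ.pathSet v w (m + n)).ncard =
      ∑ u : Λ.Vertex, (Λ.pathSet v u m).ncard * (Λ.pathSet u w n).ncard := by
  classical
  set S : Set (Λ.Path × Λ.Path) :=
    ⋃ u : Λ.Vertex, (Λ.pathSet v u m) ×ˢ (Λ.pathSet u w n) with hS
  have hmemS : ∀ p : Λ.Path × Λ.Path, p ∈ S ↔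
      Λ.d p.1 = m ∧ Λ.d p.2 = n ∧ Λ.r p.1 = v.1 ∧ Λ.s p.2 = w.1 ∧ Λ.s p.1 = Λ.r p.2 := by
    intro p
    constructor
    · rintro hp
      obtain ⟨u, hu⟩ := Set.mem_iUnion.mp hp
      obtain ⟨⟨h1, h2, h3⟩, ⟨h4, h5, h6⟩⟩ := hu
      exact ⟨h1, h4, h2, h6, by rw [h3, h5]⟩
    · rintro ⟨h1, h2, h3, h4, h5⟩
      refine Set.mem_iUnion.mpr ⟨⟨Λ.s p.1, Λ.d_s p.1⟩, ⟨⟨h1, h3, rfl⟩, ⟨h2, h5.symm, h4⟩⟩⟩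
  set f : Λ.Path × Λ.Path → Λ.Path :=
    fun p => if h : Λ.s p.1 = Λ.r p.2 then Λ.comp p.1 p.2 h else p.1 with hf
  have himg : f '' S = Λ.pathSet v w (m + n) := by
    apply Set.Subset.antisymm
    · rintro lam ⟨p, hp, rfl⟩
      obtain ⟨h1, h2, h3, h4, h5⟩ := (hmemS p).mp hp
      have : f p = Λ.comp p.1 p.2 h5 := dif_pos h5
      rw [this]
      exact ⟨by rw [Λ.d_comp, h1, h2], by rw [Λ.r_comp, h3], by rw [Λ.s_comp, h4]⟩
    · rintro lam ⟨hd, hr, hs⟩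
      obtain ⟨⟨μ, ν⟩, ⟨h, hm, hn, hcomp⟩, -⟩ := Λ.factor lam m n hd
      refine ⟨(μ, ν), (hmemS (μ, ν)).mpr ⟨hm, hn, ?_, ?_, h⟩, ?_⟩
      · rw [← hr, ← hcomp, Λ.r_comp]
      · rw [← hs, ← hcomp, Λ.s_comp]
      · rw [show f (μ, ν) = Λ.comp μ ν h from dif_pos h, hcomp]
  have hinj : Set.InjOn f S := by
    intro p hp q hq hpq
    obtain ⟨p1, p2, p3, p4, p5⟩ := (hmemS p).mp hp
    obtain ⟨q1, q2, q3, q4, q5⟩ := (hmemS q).mp hq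
    have hfp : f p = Λ.comp p.1 p.2 p5 := dif_pos p5
    have hfq : f q = Λ.comp q.1 q.2 q5 := dif_pos q5
    have hdlam : Λ.d (f p) = m + n := by rw [hfp, Λ.d_comp, p1, p2]
    obtain ⟨z, -, huniq⟩ := Λ.factor (f p) m n hdlam
    have hp' : (p.1, p.2) = z := huniq (p.1, p.2) ⟨p5, p1, p2, hfp.symm⟩
    have hq' : (q.1, q.2) = z := huniq (q.1, q.2) ⟨q5, q1, q2, by rw [← hfq, hpq]⟩
    have := hp'.trans hq'.symm
    exact Prod.ext (congrArg Prod.fst this) (congrArg Prod.snd this)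
  have h1 : (Λ.pathSet v w (m + n)).ncard = S.ncard := by
    rw [← himg, Set.ncard_image_of_injOn hinj]
  rw [h1, hS]
  rw [ncard_iUnion_aux
    (fun u => (Λ.pathSet_finite hfin v u m).prod (Λ.pathSet_finite hfin u w n))
    (fun u u' huu' => by
      rw [Set.disjoint_left]
      rintro p ⟨⟨-, -, hsu⟩, -⟩ ⟨⟨-, -, hsu'⟩, -⟩
      exact huu' (Subtype.ext (hsu ▸ hsu')))]
  refine Finset.sum_congr rfl fun u _ => ?_
  rw [Set.ncard_eq_toFinset_card _
      ((Λ.pathSet_finite hfin v u m).prod (Λ.pathSet_finite hfin u w n)),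
    ← Set.Finite.toFinset_prod (Λ.pathSet_finite hfin v u m) (Λ.pathSet_finite hfin u w n),
    Finset.card_product,
    Set.ncard_eq_toFinset_card _ (Λ.pathSet_finite hfin v u m),
    Set.ncard_eq_toFinset_card _ (Λ.pathSet_finite hfin u w n)]

lemma cMat_add [Fintype Λ.Vertex] [DecidableEq Λ.Vertex] (hfin : Λ.IsFinite)
    (m n : Fin k → ℕ) : Λ.cMat (m + n) = Λ.cMat m * Λ.cMat n := by
  ext v w
  rw [Matrix.mul_apply]
  simp only [cMat, Matrix.of_apply]
  rw [Λ.ncard_pathSet_add hfin v w m n]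
  push_cast
  rfl

lemma cMat_pow [Fintype Λ.Vertex] [DecidableEq Λ.Vertex] (hfin : Λ.IsFinite)
    (i : Fin k) (p : ℕ) : Λ.cMat (Pi.single i 1) ^ p = Λ.cMat (Pi.single i p) := by
  induction p with
  | zero => simp [Λ.cMat_zero]
  | succ p ih =>
      rw [pow_succ, ih, ← Λ.cMat_add hfin]
      have hs : (Pi.single i p + Pi.single i 1 : Fin k → ℕ) = Pi.single i (p + 1) := by
        funext j
        by_cases hj : j = i
        · subst hj; simp
        · simp [Pi.single_apply, hj]
      rw [hs]

lemma matPow_eq [Fintype Λ.Vertex] [DecidableEq Λ.Vertex] (hfin : Λ.IsFinite)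
    (n : Fin k → ℕ) : matPow (coordMatrix Λ) n = Λ.cMat n := by
  have hlist : ∀ l : List (Fin k),
      ((l.map fun i => Λ.cMat (Pi.single i (n i))).prod) =
        Λ.cMat ((l.map fun i => Pi.single i (n i)).sum) := by
    intro l
    induction l with
    | nil => simp [Λ.cMat_zero]
    | cons a l ih =>
        rw [List.map_cons, List.prod_cons, ih, List.map_cons, List.sum_cons,
          Λ.cMat_add hfin]
  have hmap : ((List.finRange k).map fun i => coordMatrix Λ i ^ n i) =
      ((List.finRange k).map fun i => Λ.cMat (Pi.single i (n i))) := by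
    apply List.map_congr_left
    intro i _
    rw [coordMatrix_eq, Λ.cMat_pow hfin]
  have hsum : ((List.finRange k).map fun i => (Pi.single i (n i) : Fin k → ℕ)).sum = n := by
    rw [← Fin.sum_univ_def]
    exact Finset.univ_sum_single n
  rw [matPow, hmap, hlist, hsum]

end KGraph

/-- The coordinate matrices of a finite `k`-graph are nonzero and pairwise commuting,
and `Λ` is strongly connected iff they form an irreducible family. -/
theorem stronglyConnected_iff_irreducible_family {k : ℕ} (Λ : KGraph k)
    (hfin : Λ.IsFinite) [Fintype Λ.Vertex] [DecidableEq Λ.Vertex] :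
    (∀ i, coordMatrix Λ i ≠ 0) ∧
    (∀ i j, coordMatrix Λ i * coordMatrix Λ j = coordMatrix Λ j * coordMatrix Λ i) ∧
    (Λ.StronglyConnected ↔ IsIrreducibleFamily (coordMatrix Λ)) := by
  classical
  have hnz : ∀ i, coordMatrix Λ i ≠ 0 := by
    intro i h
    obtain ⟨lam, hlam⟩ := Λ.edge_nonempty i
    set v : Λ.Vertex := ⟨Λ.r lam, Λ.d_r lam⟩
    set w : Λ.Vertex := ⟨Λ.s lam, Λ.d_s lam⟩
    have hmem : lam ∈ Λ.pathSet v w (Pi.single i 1) := ⟨hlam, rfl, rfl⟩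
    have hpos : 0 < (Λ.pathSet v w (Pi.single i 1)).ncard :=
      (Set.ncard_pos (Λ.pathSet_finite hfin v w _)).mpr ⟨lam, hmem⟩
    have h0 : coordMatrix Λ i v w = 0 := by rw [h]; rfl
    rw [Λ.coordMatrix_eq] at h0
    simp only [KGraph.cMat, Matrix.of_apply, Nat.cast_eq_zero] at h0
    omega
  refine ⟨hnz, ?_, ?_⟩
  · intro i j
    rw [Λ.coordMatrix_eq, Λ.coordMatrix_eq, ← Λ.cMat_add hfin, ← Λ.cMat_add hfin,
      add_comm]
  constructor
  · rintro hsc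
    refine ⟨hnz, ?_⟩
    have hch : ∀ p : Λ.Vertex × Λ.Vertex, ∃ lam : Λ.Path,
        Λ.r lam = p.1.1 ∧ Λ.s lam = p.2.1 :=
      fun p => hsc p.1.1 p.2.1 p.1.2 p.2.2
    choose ch hchr hchs using hch
    refine ⟨Finset.image (fun p => Λ.d (ch p)) Finset.univ, fun v w => ?_⟩
    rw [Matrix.sum_apply]
    apply Finset.sum_pos'
    · intro n _
      rw [Λ.matPow_eq hfin]
      exact Nat.cast_nonneg _
    · refine ⟨Λ.d (ch (v, w)), Finset.mem_image.mpr ⟨(v, w), Finset.mem_univ _, rfl⟩, ?_⟩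
      rw [Λ.matPow_eq hfin]
      have hmem : ch (v, w) ∈ Λ.pathSet v w (Λ.d (ch (v, w))) :=
        ⟨rfl, hchr (v, w), hchs (v, w)⟩
      have hpos : 0 < (Λ.pathSet v w (Λ.d (ch (v, w)))).ncard :=
        (Set.ncard_pos (Λ.pathSet_finite hfin v w _)).mpr ⟨_, hmem⟩
      simp only [KGraph.cMat, Matrix.of_apply]
      exact_mod_cast hpos
  · rintro ⟨-, F, hF⟩ v w hv hw
    set v' : Λ.Vertex := ⟨v, hv⟩
    set w' : Λ.Vertex := ⟨w, hw⟩
    have h := hF v' w'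
    rw [Matrix.sum_apply] at h
    have h' : ∑ n ∈ F, (0 : ℝ) < ∑ n ∈ F, matPow (coordMatrix Λ) n v' w' := by
      simpa using h
    obtain ⟨n, -, hn⟩ := Finset.exists_lt_of_sum_lt h'
    rw [Λ.matPow_eq hfin] at hn
    have hne : (Λ.pathSet v' w' n).ncard ≠ 0 := by
      simp only [KGraph.cMat, Matrix.of_apply] at hn
      exact_mod_cast hn.ne'
    obtain ⟨lam, -, hr, hs⟩ := Set.nonempty_of_ncard_ne_zero hne
    exact ⟨lam, hr, hs⟩
end

section
/- Let Λ be a strongly connected finite k-graph, and suppose v ∈ Λ^0 and m, n ∈ ℕ^k satisfy σ^m(x) = σ^n(x) for all x ∈ Z(v). Then σ^m(x) = σ^n(x) for all x ∈ Λ^∞. -/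
section Aux

namespace KGraph

variable {k : ℕ} {Λ : KGraph k}

lemma comp_congr {μ ν ν' : Λ.Path} (h : ν = ν') (hc : Λ.s μ = Λ.r ν) (hc' : Λ.s μ = Λ.r ν') :
    Λ.comp μ ν hc = Λ.comp μ ν' hc' := by subst h; rfl

lemma comp_congr_left {μ μ' ν : Λ.Path} (h : μ = μ') (hc : Λ.s μ = Λ.r ν)
    (hc' : Λ.s μ' = Λ.r ν) : Λ.comp μ ν hc = Λ.comp μ' ν hc' := by subst h; rfl

lemma d_sub_add {a b : Fin k → ℕ} (h : a ≤ b) : a + (b - a) = b := by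
  funext i; exact Nat.add_sub_cancel' (h i)

/-- Split a path at degree `a`. -/
noncomputable def split (z : Λ.Path) (a : Fin k → ℕ) (h : a ≤ Λ.d z) : Λ.Path × Λ.Path :=
  (Λ.factor z a (Λ.d z - a) (d_sub_add h).symm).exists.choose

lemma split_spec (z : Λ.Path) (a : Fin k → ℕ) (h : a ≤ Λ.d z) :
    ∃ hc : Λ.s (split z a h).1 = Λ.r (split z a h).2,
      Λ.d (split z a h).1 = a ∧ Λ.d (split z a h).2 = Λ.d z - a ∧
      Λ.comp (split z a h).1 (split z a h).2 hc = z :=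
  (Λ.factor z a (Λ.d z - a) (d_sub_add h).symm).exists.choose_spec

lemma split_unique {z μ ν : Λ.Path} {a : Fin k → ℕ} (h : a ≤ Λ.d z)
    (hc : Λ.s μ = Λ.r ν) (hμ : Λ.d μ = a) (hcomp : Λ.comp μ ν hc = z) :
    (μ, ν) = split z a h := by
  have hd : Λ.d ν = Λ.d z - a := by
    have hdc := Λ.d_comp μ ν hc
    rw [hcomp, hμ] at hdc
    funext i
    have := congrFun hdc i
    simp only [Pi.add_apply, Pi.sub_apply] at this ⊢
    omega
  obtain ⟨hc', h1, h2, h3⟩ := split_spec z a h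
  exact (Λ.factor z a (Λ.d z - a) (d_sub_add h).symm).unique ⟨hc, hμ, hd, hcomp⟩ ⟨hc', h1, h2, h3⟩

/-- The segment of `z` between degrees `a` and `b`. -/
noncomputable def seg (z : Λ.Path) (a b : Fin k → ℕ) (hab : a ≤ b) (hb : b ≤ Λ.d z) : Λ.Path :=
  (split (split z a (hab.trans hb)).2 (b - a) (by
    obtain ⟨_, _, hd, _⟩ := split_spec z a (hab.trans hb)
    rw [hd]
    intro i
    exact Nat.sub_le_sub_right (hb i) (a i))).1

lemma seg_congr {z z' : Λ.Path} (h : z = z') (a b : Fin k → ℕ) (hab : a ≤ b)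
    (hb : b ≤ Λ.d z) (hb' : b ≤ Λ.d z') : seg z a b hab hb = seg z' a b hab hb' := by
  subst h; rfl

/-- Master uniqueness lemma: any decomposition `z = μ(ντ)` with `d μ = a`, `d ν = b - a`
identifies `ν` as `seg z a b`. -/
lemma seg_eq {z μ ν τ : Λ.Path} {a b : Fin k → ℕ} (hab : a ≤ b) (hb : b ≤ Λ.d z)
    (hμ : Λ.d μ = a) (hν : Λ.d ν = b - a)
    (hc2 : Λ.s ν = Λ.r τ) (hc1 : Λ.s μ = Λ.r (Λ.comp ν τ hc2))
    (hz : Λ.comp μ (Λ.comp ν τ hc2) hc1 = z) :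
    seg z a b hab hb = ν := by
  have hsplit1 : (μ, Λ.comp ν τ hc2) = split z a (hab.trans hb) :=
    split_unique (hab.trans hb) hc1 hμ hz
  have h2 : (split z a (hab.trans hb)).2 = Λ.comp ν τ hc2 := by rw [← hsplit1]
  have key : ∀ (w : Λ.Path) (hw : w = Λ.comp ν τ hc2) (h1 : b - a ≤ Λ.d w),
      (split w (b - a) h1).1 = ν := by
    intro w hw h1
    subst hw
    exact (congrArg Prod.fst (split_unique h1 hc2 hν rfl)).symm
  exact key _ h2 _

lemma d_seg (z : Λ.Path) (a b : Fin k → ℕ) (hab : a ≤ b) (hb : b ≤ Λ.d z) :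
    Λ.d (seg z a b hab hb) = b - a := by
  have hba : b - a ≤ Λ.d (split z a (hab.trans hb)).2 := by
    obtain ⟨_, _, hd, _⟩ := split_spec z a (hab.trans hb)
    rw [hd]
    intro i
    exact Nat.sub_le_sub_right (hb i) (a i)
  obtain ⟨_, hd, _, _⟩ := split_spec (split z a (hab.trans hb)).2 (b - a) hba
  exact hd

/-- Existence of a decomposition `z = μ ((seg z a b) τ)`. -/
lemma seg_decomp (z : Λ.Path) (a b : Fin k → ℕ) (hab : a ≤ b) (hb : b ≤ Λ.d z) :
    ∃ (μ τ : Λ.Path) (hc2 : Λ.s (seg z a b hab hb) = Λ.r τ)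
      (hc1 : Λ.s μ = Λ.r (Λ.comp (seg z a b hab hb) τ hc2)),
      Λ.d μ = a ∧ Λ.d τ = Λ.d z - b ∧
      Λ.comp μ (Λ.comp (seg z a b hab hb) τ hc2) hc1 = z := by
  have ha := hab.trans hb
  obtain ⟨hc, hd1, hd2, hcomp⟩ := split_spec z a ha
  have hba : b - a ≤ Λ.d (split z a ha).2 := by
    rw [hd2]
    intro i
    exact Nat.sub_le_sub_right (hb i) (a i)
  obtain ⟨hc2, hd1', hd2', hcomp2⟩ := split_spec (split z a ha).2 (b - a) hba
  refine ⟨(split z a ha).1, (split (split z a ha).2 (b - a) hba).2, hc2,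
    hc.trans (congrArg Λ.r hcomp2.symm), hd1, ?_, ?_⟩
  · rw [hd2', hd2]
    funext i
    simp only [Pi.sub_apply]
    have h1 : a i ≤ b i := hab i
    have h2 : b i ≤ Λ.d z i := hb i
    omega
  · exact (comp_congr hcomp2 _ hc).trans hcomp

lemma seg_src (z : Λ.Path) (a b : Fin k → ℕ) (hab : a ≤ b) (hb : b ≤ Λ.d z) :
    Λ.s (seg z a b hab hb) = seg z b b le_rfl hb := by
  obtain ⟨μ, τ, hc2, hc1, hdμ, hdτ, hz⟩ := seg_decomp z a b hab hb
  have hsμν : Λ.s μ = Λ.r (seg z a b hab hb) := hc1.trans (Λ.r_comp _ _ _)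
  have hτ : Λ.s (Λ.r τ) = Λ.r τ := Λ.s_vertex _ (Λ.d_r τ)
  have h1 : Λ.s (Λ.s (seg z a b hab hb)) = Λ.r τ := by
    rw [Λ.s_vertex _ (Λ.d_s _), hc2]
  have h2 : Λ.comp (Λ.s (seg z a b hab hb)) τ h1 = τ :=
    (comp_congr_left hc2 h1 hτ).trans (Λ.id_comp τ hτ)
  have h3 : Λ.s (Λ.comp μ (seg z a b hab hb) hsμν) = Λ.r τ := by
    rw [Λ.s_comp]; exact hc2
  have h4 : Λ.s (Λ.comp μ (seg z a b hab hb) hsμν) = Λ.r (Λ.comp (Λ.s (seg z a b hab hb)) τ h1) := by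
    rw [h2, Λ.s_comp]; exact hc2
  refine (seg_eq le_rfl hb ?_ ?_ h1 h4 ?_).symm
  · rw [Λ.d_comp, hdμ, d_seg, d_sub_add hab]
  · rw [Λ.d_s]
    funext i
    simp
  · rw [comp_congr h2 h4 h3, Λ.assoc μ _ τ hsμν hc2 h3 hc1, hz]

lemma seg_rng (z : Λ.Path) (a b : Fin k → ℕ) (hab : a ≤ b) (hb : b ≤ Λ.d z) :
    Λ.r (seg z a b hab hb) = seg z a a le_rfl (hab.trans hb) := by
  obtain ⟨μ, τ, hc2, hc1, hdμ, hdτ, hz⟩ := seg_decomp z a b hab hb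
  set ν := seg z a b hab hb with hν
  have hw : Λ.r (Λ.comp ν τ hc2) = Λ.r ν := Λ.r_comp _ _ _
  have h1 : Λ.s (Λ.r ν) = Λ.r (Λ.comp ν τ hc2) := by
    rw [Λ.s_vertex _ (Λ.d_r ν), hw]
  have h2 : Λ.comp (Λ.r ν) (Λ.comp ν τ hc2) h1 = Λ.comp ν τ hc2 := by
    have hτ : Λ.s (Λ.r (Λ.comp ν τ hc2)) = Λ.r (Λ.comp ν τ hc2) :=
      Λ.s_vertex _ (Λ.d_r _)
    exact (comp_congr_left hw.symm h1 hτ).trans (Λ.id_comp _ hτ)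
  have h4 : Λ.s μ = Λ.r (Λ.comp (Λ.r ν) (Λ.comp ν τ hc2) h1) := by
    rw [h2]; exact hc1
  refine (seg_eq le_rfl (hab.trans hb) hdμ ?_ h1 h4 ?_).symm
  · rw [Λ.d_r]
    funext i
    simp
  · rw [comp_congr h2 h4 hc1, hz]

/-- Composing consecutive segments. -/
lemma seg_comp (z : Λ.Path) (a b c : Fin k → ℕ) (hab : a ≤ b) (hbc : b ≤ c) (hc : c ≤ Λ.d z) :
    ∃ hcc : Λ.s (seg z a b hab (hbc.trans hc)) = Λ.r (seg z b c hbc hc),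
      Λ.comp (seg z a b hab (hbc.trans hc)) (seg z b c hbc hc) hcc
        = seg z a c (hab.trans hbc) hc := by
  have hcc : Λ.s (seg z a b hab (hbc.trans hc)) = Λ.r (seg z b c hbc hc) := by
    rw [seg_src, seg_rng]
  refine ⟨hcc, ?_⟩
  obtain ⟨μ₁, τ₁, hc2₁, hc1₁, hdμ₁, hdτ₁, hz₁⟩ := seg_decomp z a b hab (hbc.trans hc)
  obtain ⟨μ₂, τ₂, hc2₂, hc1₂, hdμ₂, hdτ₂, hz₂⟩ := seg_decomp z b c hbc hc
  set ν₁ := seg z a b hab (hbc.trans hc) with hν₁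
  set ν₂ := seg z b c hbc hc with hν₂
  -- regroup z = (μ₁ν₁)τ₁ and compare with z = μ₂(ν₂τ₂) at degree b
  have hsμν : Λ.s μ₁ = Λ.r ν₁ := hc1₁.trans (Λ.r_comp _ _ _)
  have h3 : Λ.s (Λ.comp μ₁ ν₁ hsμν) = Λ.r τ₁ := by rw [Λ.s_comp]; exact hc2₁
  have hz₁' : Λ.comp (Λ.comp μ₁ ν₁ hsμν) τ₁ h3 = z := by
    rw [Λ.assoc μ₁ ν₁ τ₁ hsμν hc2₁ h3 hc1₁]; exact hz₁
  have hdb : Λ.d (Λ.comp μ₁ ν₁ hsμν) = b := by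
    rw [Λ.d_comp, hdμ₁, d_seg, d_sub_add hab]
  have hsplitb : b ≤ Λ.d z := hbc.trans hc
  have e1 := split_unique hsplitb h3 hdb hz₁'
  have e2 := split_unique hsplitb hc1₂ hdμ₂ hz₂
  have hττ : τ₁ = Λ.comp ν₂ τ₂ hc2₂ := by
    have := e1.trans e2.symm
    exact congrArg Prod.snd this
  -- now z = μ₁ (ν₁ (ν₂ τ₂)) = μ₁ ((ν₁ ν₂) τ₂)
  have hc2₁' : Λ.s ν₁ = Λ.r (Λ.comp ν₂ τ₂ hc2₂) := by rw [← hττ]; exact hc2₁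
  have hcn : Λ.s (Λ.comp ν₁ ν₂ hcc) = Λ.r τ₂ := by rw [Λ.s_comp]; exact hc2₂
  have hstep : Λ.comp ν₁ (Λ.comp ν₂ τ₂ hc2₂) hc2₁' = Λ.comp (Λ.comp ν₁ ν₂ hcc) τ₂ hcn :=
    (Λ.assoc ν₁ ν₂ τ₂ hcc hc2₂ hcn hc2₁').symm
  have hc1' : Λ.s μ₁ = Λ.r (Λ.comp (Λ.comp ν₁ ν₂ hcc) τ₂ hcn) := by
    rw [Λ.r_comp, Λ.r_comp]
    exact hsμν
  refine (seg_eq (hab.trans hbc) hc hdμ₁ ?_ hcn hc1' ?_).symm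
  · rw [Λ.d_comp, d_seg, d_seg]
    funext i
    simp only [Pi.add_apply, Pi.sub_apply]
    have h1 : a i ≤ b i := hab i
    have h2 : b i ≤ c i := hbc i
    omega
  · have : Λ.comp μ₁ (Λ.comp (Λ.comp ν₁ ν₂ hcc) τ₂ hcn) hc1'
        = Λ.comp μ₁ (Λ.comp ν₁ τ₁ hc2₁) hc1₁ := by
      rw [comp_congr (hstep.symm.trans (comp_congr hττ.symm hc2₁' hc2₁)) hc1' hc1₁]
    rw [this, hz₁]

lemma seg_zero_zero (z : Λ.Path) (h1 : (0 : Fin k → ℕ) ≤ 0) (h2 : (0 : Fin k → ℕ) ≤ Λ.d z) :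
    seg z 0 0 h1 h2 = Λ.r z := by
  have hcν : Λ.s (Λ.r z) = Λ.r z := Λ.s_vertex _ (Λ.d_r z)
  have hid : Λ.comp (Λ.r z) z hcν = z := Λ.id_comp z hcν
  have hc1 : Λ.s (Λ.r z) = Λ.r (Λ.comp (Λ.r z) z hcν) := by
    rw [hid]; exact hcν
  refine seg_eq h1 h2 (Λ.d_r z) ?_ hcν hc1 ?_
  · rw [Λ.d_r]
    funext i
    simp
  · rw [comp_congr hid hc1 hcν, hid]

/-- Segments of an extension `comp z w` below `d z` agree with segments of `z`. -/
lemma seg_prefix {z' z w : Λ.Path} (hcw : Λ.s z = Λ.r w) (hext : z' = Λ.comp z w hcw)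
    (a b : Fin k → ℕ) (hab : a ≤ b) (hb : b ≤ Λ.d z) (hb' : b ≤ Λ.d z') :
    seg z' a b hab hb' = seg z a b hab hb := by
  subst hext
  obtain ⟨μ, τ, hc2, hc1, hdμ, hdτ, hz⟩ := seg_decomp z a b hab hb
  set ν := seg z a b hab hb with hν
  have hsτ : Λ.s τ = Λ.r w := by
    have h1 : Λ.s (Λ.comp μ (Λ.comp ν τ hc2) hc1) = Λ.s τ := by
      rw [Λ.s_comp, Λ.s_comp]
    rw [← h1, hz]; exact hcw
  have hc2' : Λ.s ν = Λ.r (Λ.comp τ w hsτ) := by rw [Λ.r_comp]; exact hc2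
  have hcnt : Λ.s (Λ.comp ν τ hc2) = Λ.r w := by rw [Λ.s_comp]; exact hsτ
  have hc1' : Λ.s μ = Λ.r (Λ.comp ν (Λ.comp τ w hsτ) hc2') := by
    rw [Λ.r_comp]
    exact hc1.trans (Λ.r_comp _ _ _)
  have hcmt : Λ.s μ = Λ.r (Λ.comp (Λ.comp ν τ hc2) w hcnt) := by
    rw [Λ.r_comp]; exact hc1
  refine seg_eq hab hb' hdμ (by rw [hν, d_seg]) hc2' hc1' ?_
  have step1 : Λ.comp ν (Λ.comp τ w hsτ) hc2' = Λ.comp (Λ.comp ν τ hc2) w hcnt :=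
    (Λ.assoc ν τ w hc2 hsτ hcnt hc2').symm
  have hsz : Λ.s μ = Λ.r (Λ.comp ν τ hc2) := hc1
  have hsmz : Λ.s (Λ.comp μ (Λ.comp ν τ hc2) hsz) = Λ.r w := by
    rw [Λ.s_comp]; exact hcnt
  have step2 : Λ.comp μ (Λ.comp (Λ.comp ν τ hc2) w hcnt) hcmt
      = Λ.comp (Λ.comp μ (Λ.comp ν τ hc2) hsz) w hsmz :=
    (Λ.assoc μ (Λ.comp ν τ hc2) w hsz hcnt hsmz hcmt).symm
  rw [comp_congr step1 hc1' hcmt, step2]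
  exact comp_congr_left hz hsmz hcw

end KGraph

section InfinitePathAux

namespace InfinitePath

variable {k : ℕ} {Λ : KGraph k}

lemma toFun_congr (x : InfinitePath Λ) {m n m' n' : Fin k → ℕ} (hm : m = m') (hn : n = n')
    (h : m ≤ n) (h' : m' ≤ n') : x.toFun m n h = x.toFun m' n' h' := by
  subst hm; subst hn; rfl

lemma ext' {x y : InfinitePath Λ} (h : x.toFun = y.toFun) : x = y := by
  cases x; cases y
  simp only [mk.injEq] at *
  exact h

lemma shift_shift (y : InfinitePath Λ) (a b : Fin k → ℕ) :
    (y.shift a).shift b = y.shift (a + b) := by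
  apply ext'
  funext p q h
  exact y.toFun_congr (add_assoc a b p).symm (add_assoc a b q).symm _ _

end InfinitePath

end InfinitePathAux


section Main

namespace KGraph

variable {k : ℕ} {Λ : KGraph k}

/-- The key computation: the segment of `lam·x(0,q)` between `d lam + p` and `d lam + q`
is `x(p,q)`. -/
lemma seg_shift (lam : Λ.Path) (x : InfinitePath Λ) (p q : Fin k → ℕ) (hpq : p ≤ q)
    (hc : Λ.s lam = Λ.r (x.toFun 0 q zero_le))
    (h1 : Λ.d lam + p ≤ Λ.d lam + q)
    (h2 : Λ.d lam + q ≤ Λ.d (Λ.comp lam (x.toFun 0 q zero_le) hc)) :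
    seg (Λ.comp lam (x.toFun 0 q zero_le) hc) (Λ.d lam + p) (Λ.d lam + q) h1 h2
      = x.toFun p q hpq := by
  have hc0 : Λ.s lam = Λ.r (x.toFun 0 p zero_le) := by
    rw [x.rng]
    rw [x.rng] at hc
    exact hc
  set μ := Λ.comp lam (x.toFun 0 p zero_le) hc0 with hμdef
  set ν := x.toFun p q hpq with hνdef
  set τ := x.toFun q q le_rfl with hτdef
  have hc2 : Λ.s ν = Λ.r τ := by rw [x.src, x.rng]
  have hc2' : Λ.s ν = Λ.r (Λ.s ν) := (Λ.r_vertex _ (Λ.d_s _)).symm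
  have hcomp2 : Λ.comp ν τ hc2 = ν := by
    have hτs : τ = Λ.s ν := (x.src p q hpq).symm
    exact (comp_congr hτs hc2 hc2').trans (Λ.comp_id ν hc2')
  have hc1 : Λ.s μ = Λ.r (Λ.comp ν τ hc2) := by
    rw [hcomp2, x.rng, hμdef, Λ.s_comp, x.src]
  refine seg_eq h1 h2 ?_ ?_ hc2 hc1 ?_
  · rw [hμdef, Λ.d_comp, x.d_eq]
    funext i
    simp only [Pi.add_apply, Pi.sub_apply, Pi.zero_apply]
    omega
  · rw [hνdef, x.d_eq]
    funext i
    simp only [Pi.add_apply, Pi.sub_apply]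
    have := hpq i
    omega
  · have hcp : Λ.s (x.toFun 0 p zero_le) = Λ.r ν := by rw [x.src, x.rng]
    have hc4 : Λ.s lam = Λ.r (Λ.comp (x.toFun 0 p zero_le) ν hcp) := by
      rw [Λ.r_comp]; exact hc0
    have hc3 : Λ.s μ = Λ.r ν := by rw [hμdef, Λ.s_comp, x.src, x.rng]
    calc Λ.comp μ (Λ.comp ν τ hc2) hc1
        = Λ.comp μ ν hc3 := comp_congr hcomp2 hc1 hc3
      _ = Λ.comp lam (Λ.comp (x.toFun 0 p zero_le) ν hcp) hc4 :=
          Λ.assoc lam (x.toFun 0 p zero_le) ν hc0 hcp hc3 hc4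
      _ = Λ.comp lam (x.toFun 0 q zero_le) hc := by
          refine comp_congr ?_ hc4 hc
          exact x.comp_eq 0 p q zero_le hpq hcp

/-- Any infinite path with range `s lam` extends along `lam`. -/
lemma extend (lam : Λ.Path) (x : InfinitePath Λ) (hx : x.range = Λ.s lam) :
    ∃ y : InfinitePath Λ, y.range = Λ.r lam ∧ y.shift (Λ.d lam) = x := by
  set d := Λ.d lam with hd
  have hclam : ∀ (a : Fin k → ℕ), Λ.s lam = Λ.r (x.toFun 0 a zero_le) := by
    intro a
    rw [x.rng, ← hx]
    rfl
  set Z : (Fin k → ℕ) → Λ.Path :=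
    fun q => Λ.comp lam (x.toFun 0 ((q ⊔ d) - d) zero_le) (hclam _) with hZ
  have hqZ : ∀ q, q ≤ Λ.d (Z q) := by
    intro q i
    show q i ≤ Λ.d (Z q) i
    rw [hZ]
    simp only [Λ.d_comp, x.d_eq, Pi.add_apply, Pi.sub_apply, Pi.sup_apply, Pi.zero_apply, hd]
    omega
  have hZstep : ∀ p q : Fin k → ℕ, p ≤ q →
      ∃ (w : Λ.Path) (hcw : Λ.s (Z p) = Λ.r w), Z q = Λ.comp (Z p) w hcw := by
    intro p q hpq
    have hee : (p ⊔ d) - d ≤ (q ⊔ d) - d := by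
      intro i
      simp only [Pi.sub_apply, Pi.sup_apply]
      exact Nat.sub_le_sub_right (max_le_max (hpq i) le_rfl) _
    refine ⟨x.toFun ((p ⊔ d) - d) ((q ⊔ d) - d) hee, ?_, ?_⟩
    · rw [hZ]
      show Λ.s (Λ.comp lam _ _) = _
      rw [Λ.s_comp, x.src, x.rng]
    · have h2 : Λ.s (x.toFun 0 ((p ⊔ d) - d) zero_le)
          = Λ.r (x.toFun ((p ⊔ d) - d) ((q ⊔ d) - d) hee) := by
        rw [x.src, x.rng]
      have h4 : Λ.s lam = Λ.r (Λ.comp (x.toFun 0 ((p ⊔ d) - d) zero_le)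
          (x.toFun ((p ⊔ d) - d) ((q ⊔ d) - d) hee) h2) := by
        rw [Λ.r_comp]; exact hclam _
      have hcw : Λ.s (Z p) = Λ.r (x.toFun ((p ⊔ d) - d) ((q ⊔ d) - d) hee) := by
        rw [hZ]
        show Λ.s (Λ.comp lam _ _) = _
        rw [Λ.s_comp, x.src, x.rng]
      calc Z q = Λ.comp lam (x.toFun 0 ((q ⊔ d) - d) zero_le) (hclam _) := rfl
        _ = Λ.comp lam (Λ.comp (x.toFun 0 ((p ⊔ d) - d) zero_le)
              (x.toFun ((p ⊔ d) - d) ((q ⊔ d) - d) hee) h2) h4 := by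
            refine comp_congr ?_ _ h4
            exact (x.comp_eq 0 _ _ zero_le hee h2).symm
        _ = Λ.comp (Z p) (x.toFun ((p ⊔ d) - d) ((q ⊔ d) - d) hee) hcw :=
            (Λ.assoc lam _ _ (hclam _) h2 hcw h4).symm
  refine ⟨⟨fun p q hpq => seg (Z q) p q hpq (hqZ q), ?_, ?_, ?_, ?_⟩, ?_, ?_⟩
  · intro p q hpq
    exact d_seg _ _ _ _ _
  · intro p q hpq
    exact seg_src _ _ _ _ _
  · intro p q hpq
    obtain ⟨w, hcw, hZq⟩ := hZstep p q hpq
    rw [seg_rng]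
    exact seg_prefix hcw hZq p p le_rfl (hqZ p) (hpq.trans (hqZ q))
  · intro p q t h1 h2 hcc
    obtain ⟨w, hcw, hZq⟩ := hZstep q t h2
    have hql : seg (Z t) p q h1 (h2.trans (hqZ t)) = seg (Z q) p q h1 (hqZ q) :=
      seg_prefix hcw hZq p q h1 (hqZ q) (h2.trans (hqZ t))
    obtain ⟨hcc', hmain⟩ := seg_comp (Z t) p q t h1 h2 (hqZ t)
    exact (comp_congr_left hql.symm hcc hcc').trans hmain
  · -- range = r lam
    show seg (Z 0) 0 0 le_rfl (hqZ 0) = Λ.r lam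
    rw [seg_zero_zero, hZ]
    show Λ.r (Λ.comp lam _ _) = _
    rw [Λ.r_comp]
  · -- shift d = x
    apply InfinitePath.ext'
    funext p q hpq
    show seg (Z (d + q)) (d + p) (d + q) (add_le_add le_rfl hpq) (hqZ (d + q)) = x.toFun p q hpq
    have heq : ((d + q) ⊔ d) - d = q := by
      funext i
      simp only [Pi.sub_apply, Pi.sup_apply, Pi.add_apply]
      omega
    have hc : Λ.s lam = Λ.r (x.toFun 0 q zero_le) := hclam q
    have hZval : Z (d + q) = Λ.comp lam (x.toFun 0 q zero_le) hc := by
      rw [hZ]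
      exact comp_congr (x.toFun_congr rfl heq _ _) _ hc
    have h2' : d + q ≤ Λ.d (Λ.comp lam (x.toFun 0 q zero_le) hc) := by
      rw [← hZval]; exact hqZ (d + q)
    refine (seg_congr hZval (d + p) (d + q) (add_le_add le_rfl hpq) (hqZ (d + q)) h2').trans ?_
    exact seg_shift lam x p q hpq hc (add_le_add le_rfl hpq) h2'

end KGraph

end Main


/-- If `σ^m(x) = σ^n(x)` for all `x ∈ Z(v)` for some vertex `v` of a strongly connected
finite `k`-graph, then `σ^m(x) = σ^n(x)` for every infinite path `x`. -/
theorem local_periodicity_global {k : ℕ} (Λ : KGraph k)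
    (hfin : Λ.IsFinite) (hsc : Λ.StronglyConnected)
    (v : Λ.Path) (hv : Λ.d v = 0) (m n : Fin k → ℕ)
    (h : ∀ x : InfinitePath Λ, x.range = v → x.shift m = x.shift n) :
    ∀ x : InfinitePath Λ, x.shift m = x.shift n := by
  intro x
  have hw : Λ.d x.range = 0 := by
    show Λ.d (x.toFun 0 0 le_rfl) = 0
    rw [x.d_eq]
    funext i
    simp
  obtain ⟨lam, hr, hs⟩ := hsc v x.range hv hw
  obtain ⟨y, hyr, hys⟩ := KGraph.extend lam x hs.symm
  have hy := h y (by rw [hyr, hr])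
  have key : ∀ t : Fin k → ℕ, x.shift t = y.shift (Λ.d lam + t) := by
    intro t
    rw [← hys, InfinitePath.shift_shift]
  calc x.shift m = y.shift (Λ.d lam + m) := key m
    _ = (y.shift m).shift (Λ.d lam) := by rw [InfinitePath.shift_shift, add_comm]
    _ = (y.shift n).shift (Λ.d lam) := by rw [hy]
    _ = y.shift (Λ.d lam + n) := by rw [InfinitePath.shift_shift, add_comm]
    _ = x.shift n := (key n).symm
end Aux
end
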